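/- arXiv:1007.2103 — 6 statements merged into one kernel-verified Lean document; each statement's English description precedes it below -/
import Mathlib

section
/- Every loopless undirected graph G on a finite vertex set with n vertices has Boolean dimension at most n − 1. -/
/-- A tournament on a vertex set `V`: a loopless directed graph such that for all
distinct `x, y` exactly one of `(x,y)`, `(y,x)` is an arc. -/
structure Tournament (V : Type*) where
  rel : V → V → Prop
  irrefl : ∀ x, ¬ rel x x
  total : ∀ x y, x ≠ y → rel x y ∨ rel y x
  asymm : ∀ x y, rel x y → ¬ rel y x

namespace Tournament

variable {V : Type*} {W : Type*}

/-- The tournament obtained from `T` by reversing all arcs both of whose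
endpoints lie in `X`. -/
def inv (T : Tournament V) (X : Set V) : Tournament V where
  rel x y := (x ∈ X ∧ y ∈ X ∧ T.rel y x) ∨ ((x ∉ X ∨ y ∉ X) ∧ T.rel x y)
  irrefl x := by have := T.irrefl x; tauto
  total x y hxy := by
    have := T.total x y hxy
    by_cases hx : x ∈ X <;> by_cases hy : y ∈ X <;> tauto
  asymm x y := by have h1 := T.asymm x y; have h2 := T.asymm y x; tauto

/-- Successive inversions along a finite sequence of subsets (`X_0` first). -/
def invSeq (T : Tournament V) (Xs : List (Set V)) : Tournament V :=
  Xs.foldl Tournament.inv T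

/-- A tournament is acyclic (transitive) when its arc relation is transitive,
i.e. a strict linear order. -/
def IsAcyclic (T : Tournament V) : Prop :=
  ∀ x y z, T.rel x y → T.rel y z → T.rel x z

/-- The inversion index: the least number of subsets to be inverted to reach an
acyclic tournament. -/
noncomputable def index (T : Tournament V) : ℕ :=
  sInf {m | ∃ Xs : List (Set V), Xs.length = m ∧ (T.invSeq Xs).IsAcyclic}

/-- Induced subtournament on a set of vertices. -/
def restrict (T : Tournament V) (A : Set V) : Tournament A where
  rel x y := T.rel x y
  irrefl x := T.irrefl x
  total x y hxy := T.total x y (fun h => hxy (Subtype.ext h))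
  asymm x y := T.asymm x y

/-- `T − x`: the subtournament induced on `V ∖ {x}`. -/
def erase (T : Tournament V) (x : V) : Tournament {y : V // y ≠ x} :=
  T.restrict {y | y ≠ x}

/-- `S` embeds into `T`: `S` is isomorphic to the subtournament of `T` induced on
some subset of the vertices of `T`. -/
def Embeds (S : Tournament V) (T : Tournament W) : Prop :=
  ∃ f : V → W, Function.Injective f ∧ ∀ x y, S.rel x y ↔ T.rel (f x) (f y)

/-- Isomorphism of tournaments. -/
def Iso (S : Tournament V) (T : Tournament W) : Prop :=
  ∃ e : V ≃ W, ∀ x y, S.rel x y ↔ T.rel (e x) (e y)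

/-- The dual tournament, obtained by reversing all arcs. -/
def dual (T : Tournament V) : Tournament V where
  rel x y := T.rel y x
  irrefl x := T.irrefl x
  total x y hxy := (T.total x y hxy).symm
  asymm x y h := T.asymm y x h

/-- `X` is an interval of `T`. -/
def IsInterval (T : Tournament V) (X : Set V) : Prop :=
  ∀ y ∉ X, (∀ x ∈ X, T.rel x y) ∨ (∀ x ∈ X, T.rel y x)

/-- A tournament is indecomposable when all its intervals are trivial. -/
def Indecomposable (T : Tournament V) : Prop :=
  ∀ X : Set V, T.IsInterval X → X = ∅ ∨ X = Set.univ ∨ ∃ x, X = {x}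

end Tournament

/-- The transitive tournament `n̲` on `{0, …, n−1}`, with arcs `(i,j)` for `i < j`. -/
def linear (n : ℕ) : Tournament (Fin n) where
  rel x y := x < y
  irrefl x := lt_irrefl x
  total _ _ h := lt_or_gt_of_ne h
  asymm _ _ h := lt_asymm h

/-- `2ℕ_{<k} = {0, 2, …, 2(k−1)}` as a subset of `Fin N`. -/
def evensLT {N : ℕ} (k : ℕ) : Set (Fin N) := {i | (i : ℕ) % 2 = 0 ∧ (i : ℕ) < 2 * k}

/-- `2ℕ_{<k}+1 = {1, 3, …, 2k−1}` as a subset of `Fin N`. -/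
def oddsLT {N : ℕ} (k : ℕ) : Set (Fin N) := {i | (i : ℕ) % 2 = 1 ∧ (i : ℕ) < 2 * k}

/-- The Boolean dimension of a (loopless, undirected) graph `G`: the least `m` such
that `G` can be represented by the non-orthogonality relation on `(𝔽₂)^m` with the
ordinary scalar product. -/
noncomputable def booleanDim {V : Type*} (G : SimpleGraph V) : ℕ :=
  sInf {m | ∃ f : V → (Fin m → ZMod 2), ∀ x y : V, x ≠ y →
    (G.Adj x y ↔ ∑ i, f x i * f y i = 1)}


open Finset

private lemma zmod2_add_self : ∀ z : ZMod 2, z + z = 0 := by decide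

private lemma zmod2_ne_zero' : ∀ z : ZMod 2, z ≠ 0 → z = 1 := by decide
private lemma zmod2_ne_zero {z : ZMod 2} (h : z ≠ 0) : z = 1 := zmod2_ne_zero' z h

private lemma snoc_add {m : ℕ} (u v : Fin m → ZMod 2) (a b : ZMod 2) :
    (Fin.snoc (u + v) (a + b) : Fin (m + 1) → ZMod 2) = Fin.snoc u a + Fin.snoc v b := by
  funext i
  refine Fin.lastCases ?_ ?_ i <;> simp

private lemma snoc_smul {m : ℕ} (r : ZMod 2) (u : Fin m → ZMod 2) (a : ZMod 2) :
    (Fin.snoc (r • u) (r * a) : Fin (m + 1) → ZMod 2) = r • Fin.snoc u a := by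
  funext i
  refine Fin.lastCases ?_ ?_ i <;> simp

private lemma snoc_zero {m : ℕ} :
    (Fin.snoc (0 : Fin m → ZMod 2) (0 : ZMod 2) : Fin (m + 1) → ZMod 2) = 0 := by
  funext i
  refine Fin.lastCases ?_ ?_ i <;> simp

private lemma snoc_dot {m : ℕ} (u u' : Fin m → ZMod 2) (a b : ZMod 2) :
    ∑ i, Fin.snoc u a i * Fin.snoc u' b i = (∑ i, u i * u' i) + a * b := by
  rw [Fin.sum_univ_castSucc]; simp

private lemma exists_w (m : ℕ) (V' : Type*) [Fintype V'] (hcard : Fintype.card V' = m + 1)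
    (g : V' → Fin m → ZMod 2) (hspan : Submodule.span (ZMod 2) (Set.range g) = ⊤)
    (a : V' → ZMod 2) :
    ∃ (w : Fin m → ZMod 2) (c : V' → ZMod 2),
      (∀ x, ∑ i, w i * g x i = a x + c x) ∧
      (∀ x y, x ≠ y → c x * c y = 0) ∧
      Submodule.span (ZMod 2) (g '' {x | c x = 0}) = ⊤ := by
  classical
  -- a nontrivial linear relation among the `g x`
  have hnli : ¬ LinearIndependent (ZMod 2) g := by
    intro h
    have := h.fintype_card_le_finrank
    simp [hcard] at this
  rw [Fintype.not_linearIndependent_iff] at hnli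
  obtain ⟨r, hr, x₀, hx₀⟩ := hnli
  have hrx₀ : r x₀ = 1 := zmod2_ne_zero hx₀
  -- the linear map φ
  let φ : (Fin m → ZMod 2) →ₗ[ZMod 2] (V' → ZMod 2) :=
    { toFun := fun w x => ∑ i, w i * g x i
      map_add' := by intro u v; funext x; simp [add_mul, Finset.sum_add_distrib]
      map_smul' := by intro r u; funext x; simp [Finset.mul_sum, mul_assoc]}
  have hφinj : Function.Injective φ := by
    rw [← LinearMap.ker_eq_bot]
    rw [Submodule.eq_bot_iff]
    intro w hw
    rw [LinearMap.mem_ker] at hw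
    let ψ : (Fin m → ZMod 2) →ₗ[ZMod 2] ZMod 2 :=
      { toFun := fun u => ∑ i, w i * u i
        map_add' := by intro u v; simp [mul_add, Finset.sum_add_distrib]
        map_smul' := by intro r u; simp [Finset.mul_sum, mul_left_comm]}
    have hψ : ∀ u, ψ u = 0 := by
      intro u
      have hu : u ∈ Submodule.span (ZMod 2) (Set.range g) := by rw [hspan]; exact trivial
      have : Submodule.span (ZMod 2) (Set.range g) ≤ LinearMap.ker ψ := by
        rw [Submodule.span_le]
        rintro _ ⟨x, rfl⟩
        have := congrFun hw x
        simpa [ψ, φ] using this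
      exact this hu
    funext j
    have := hψ (Pi.single j 1)
    simpa [ψ, Pi.single_apply, mul_ite] using this
  -- the functional L
  let L : (V' → ZMod 2) →ₗ[ZMod 2] ZMod 2 :=
    { toFun := fun z => ∑ x, r x * z x
      map_add' := by intro u v; simp [mul_add, Finset.sum_add_distrib]
      map_smul' := by intro t u; simp [Finset.mul_sum, mul_left_comm]}
  have hgi : ∀ i, ∑ x, r x * g x i = 0 := by
    intro i
    have := congrFun hr i
    simpa using this
  have hLφ : ∀ w, L (φ w) = 0 := by
    intro w
    show ∑ x, r x * ∑ i, w i * g x i = 0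
    simp only [Finset.mul_sum]
    rw [Finset.sum_comm]
    refine Finset.sum_eq_zero fun i _ => ?_
    have : ∀ x, r x * (w i * g x i) = w i * (r x * g x i) := fun x => by ring
    simp only [this, ← Finset.mul_sum, hgi i, mul_zero]
  have hle : LinearMap.range φ ≤ LinearMap.ker L := by
    rintro _ ⟨w, rfl⟩
    exact hLφ w
  have hLtop : LinearMap.range L = ⊤ := by
    rw [Submodule.eq_top_iff']
    intro z
    refine ⟨z • (Pi.single x₀ 1 : V' → ZMod 2), ?_⟩
    show ∑ x, r x * (z • (Pi.single x₀ 1 : V' → ZMod 2)) x = z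
    simp [Pi.single_apply, mul_ite, hrx₀, Finset.sum_ite_eq', mul_comm]
  have hranks : Module.finrank (ZMod 2) (LinearMap.ker L) ≤
      Module.finrank (ZMod 2) (LinearMap.range φ) := by
    have h1 := LinearMap.finrank_range_add_finrank_ker L
    have h2 : Module.finrank (ZMod 2) (LinearMap.range φ) = m :=
      (LinearMap.finrank_range_of_inj hφinj).trans (by simp)
    rw [hLtop] at h1
    simp [hcard] at h1
    omega
  have heq : LinearMap.range φ = LinearMap.ker L :=
    Submodule.eq_of_le_of_finrank_le hle hranks
  by_cases hLa : L a = 0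
  · obtain ⟨w, hw⟩ : a ∈ LinearMap.range φ := by rw [heq]; exact hLa
    refine ⟨w, 0, fun x => ?_, fun x y _ => by simp, ?_⟩
    · have := congrFun hw x
      simpa [φ] using this
    · have : {x : V' | (0 : V' → ZMod 2) x = 0} = Set.univ := by
        ext x; simp
      rw [this, Set.image_univ, hspan]
  · have hLa1 : L a = 1 := zmod2_ne_zero hLa
    have hmem : a + (Pi.single x₀ 1 : V' → ZMod 2) ∈ LinearMap.range φ := by
      rw [heq, LinearMap.mem_ker, map_add, hLa1]
      have : L (Pi.single x₀ 1 : V' → ZMod 2) = 1 := by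
        show ∑ x, r x * (Pi.single x₀ 1 : V' → ZMod 2) x = 1
        simp [Pi.single_apply, mul_ite, hrx₀, Finset.sum_ite_eq']
      rw [this]
      decide
    obtain ⟨w, hw⟩ := hmem
    refine ⟨w, (Pi.single x₀ 1 : V' → ZMod 2), fun x => ?_, fun x y hxy => ?_, ?_⟩
    · have := congrFun hw x
      simpa [φ] using this
    · rcases ne_or_eq x x₀ with h | rfl
      · simp [Pi.single_apply, h]
      · simp [Pi.single_apply, (hxy.symm : y ≠ x), mul_comm]
    · -- span of g over {x ≠ x₀} is everything
      have hsub : {x : V' | (Pi.single x₀ 1 : V' → ZMod 2) x = 0} = {x | x ≠ x₀} := by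
        ext x
        simp [Pi.single_apply]
      rw [hsub]
      have hx₀mem : g x₀ ∈ Submodule.span (ZMod 2) (g '' {x | x ≠ x₀}) := by
        have hS : ∑ x ∈ Finset.univ.erase x₀, r x • g x ∈
            Submodule.span (ZMod 2) (g '' {x | x ≠ x₀}) := by
          refine Submodule.sum_mem _ fun x hx => ?_
          refine Submodule.smul_mem _ _ (Submodule.subset_span ?_)
          exact ⟨x, Finset.ne_of_mem_erase hx, rfl⟩
        have hsplit : g x₀ + ∑ x ∈ Finset.univ.erase x₀, r x • g x = 0 := by
          have := hr
          rw [← Finset.add_sum_erase _ _ (Finset.mem_univ x₀)] at this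
          rwa [hrx₀, one_smul] at this
        have : g x₀ = ∑ x ∈ Finset.univ.erase x₀, r x • g x := by
          have hneg := eq_neg_of_add_eq_zero_left hsplit
          rw [hneg, ← neg_one_smul (ZMod 2), show (-1 : ZMod 2) = 1 by decide, one_smul]
        rw [this]
        exact hS
      rw [eq_top_iff, ← hspan]
      rw [Submodule.span_le]
      rintro _ ⟨x, rfl⟩
      rcases ne_or_eq x x₀ with h | rfl
      · exact Submodule.subset_span ⟨x, h, rfl⟩
      · exact hx₀mem

private lemma key (n : ℕ) : ∀ (V : Type u) [Fintype V], Fintype.card V = n + 1 →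
    ∀ G : SimpleGraph V, ∃ f : V → Fin n → ZMod 2,
      (∀ x y : V, x ≠ y → (G.Adj x y ↔ ∑ i, f x i * f y i = 1)) ∧
      Submodule.span (ZMod 2) (Set.range f) = ⊤ := by
  induction n with
  | zero =>
    intro V _ hcard G
    have hsub : Subsingleton V := Fintype.card_le_one_iff_subsingleton.mp (by omega)
    refine ⟨fun _ => 0, fun x y hxy => absurd (Subsingleton.elim x y) hxy, ?_⟩
    rw [Submodule.eq_top_iff']
    intro z
    have : z = 0 := funext fun i => i.elim0
    rw [this]
    exact Submodule.zero_mem _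
  | succ n ih =>
    intro V _ hcard G
    classical
    obtain ⟨v⟩ : Nonempty V := Fintype.card_pos_iff.mp (by omega)
    have hcard' : Fintype.card {y : V // y ≠ v} = n + 1 := by
      rw [Fintype.card_subtype_compl, Fintype.card_subtype_eq, hcard]
      omega
    obtain ⟨f', hf'adj, hf'span⟩ := ih {y : V // y ≠ v} hcard' (G.comap Subtype.val)
    set a : {y : V // y ≠ v} → ZMod 2 := fun x => if G.Adj v x then 1 else 0 with ha
    obtain ⟨w, c, hw, hc, hcspan⟩ := exists_w n _ hcard' f' hf'span a
    set f : V → Fin (n + 1) → ZMod 2 :=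
      fun x => if h : x = v then Fin.snoc w 1 else Fin.snoc (f' ⟨x, h⟩) (c ⟨x, h⟩) with hf
    have hfv : f v = Fin.snoc w 1 := by rw [hf]; simp
    have hfx : ∀ (x : V) (h : x ≠ v), f x = Fin.snoc (f' ⟨x, h⟩) (c ⟨x, h⟩) := by
      intro x h; rw [hf]; simp [h]
    -- the dot product with `v`
    have hdotv : ∀ (y : V) (h : y ≠ v), ∑ i, f v i * f y i = a ⟨y, h⟩ := by
      intro y h
      rw [hfv, hfx y h, snoc_dot, hw ⟨y, h⟩, one_mul, add_assoc, zmod2_add_self, add_zero]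
    refine ⟨f, ?_, ?_⟩
    · intro x y hxy
      by_cases hx : x = v
      · have hy : y ≠ v := fun h => hxy (hx.trans h.symm)
        rw [hx, hdotv y hy, ha]
        by_cases hadj : G.Adj v y <;> simp [hadj]
      · by_cases hy : y = v
        · have hcomm : ∑ i, f x i * f v i = ∑ i, f v i * f x i :=
            Finset.sum_congr rfl fun i _ => mul_comm _ _
          rw [hy, hcomm, hdotv x hx, ha, G.adj_comm]
          by_cases hadj : G.Adj v x <;> simp [hadj]
        · have hxy' : (⟨x, hx⟩ : {y : V // y ≠ v}) ≠ ⟨y, hy⟩ :=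
            fun h => hxy (congrArg Subtype.val h)
          have := hf'adj ⟨x, hx⟩ ⟨y, hy⟩ hxy'
          rw [hfx x hx, hfx y hy, snoc_dot, hc ⟨x, hx⟩ ⟨y, hy⟩ hxy', add_zero]
          exact this
    · -- spanning
      rw [Submodule.eq_top_iff']
      set M := Submodule.span (ZMod 2) (Set.range f) with hM
      have h1 : ∀ u : Fin n → ZMod 2, (Fin.snoc u 0 : Fin (n+1) → ZMod 2) ∈ M := by
        intro u
        have hu : u ∈ Submodule.span (ZMod 2) (f' '' {x | c x = 0}) := by
          rw [hcspan]; exact trivial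
        induction hu using Submodule.span_induction with
        | mem z hz =>
          obtain ⟨x, hx0, rfl⟩ := hz
          have : (Fin.snoc (f' x) 0 : Fin (n+1) → ZMod 2) = f x.val := by
            rw [hfx x.val x.2, ← hx0]
          rw [this]
          exact Submodule.subset_span ⟨x.val, rfl⟩
        | zero => rw [snoc_zero]; exact Submodule.zero_mem _
        | add u₁ u₂ _ _ h₁ h₂ =>
          have : (Fin.snoc (u₁ + u₂) 0 : Fin (n+1) → ZMod 2) =
              Fin.snoc u₁ 0 + Fin.snoc u₂ 0 := by
            rw [← snoc_add]; norm_num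
          rw [this]; exact Submodule.add_mem _ h₁ h₂
        | smul t u _ h =>
          have : (Fin.snoc (t • u) 0 : Fin (n+1) → ZMod 2) = t • Fin.snoc u 0 := by
            rw [← snoc_smul]; norm_num
          rw [this]; exact Submodule.smul_mem _ _ h
      have h2 : (Fin.snoc 0 1 : Fin (n+1) → ZMod 2) ∈ M := by
        have hfvM : Fin.snoc w 1 ∈ M := Submodule.subset_span ⟨v, hfv⟩
        have heq2 : Fin.snoc w 1 + Fin.snoc w 0 = (Fin.snoc 0 1 : Fin (n+1) → ZMod 2) := by
          rw [← snoc_add,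
            show w + w = (0 : Fin n → ZMod 2) from funext fun i => zmod2_add_self (w i)]
          norm_num
        rw [← heq2]
        exact Submodule.add_mem _ hfvM (h1 w)
      intro z
      have hz : z = Fin.snoc (Fin.init z) 0 + z (Fin.last n) • (Fin.snoc 0 1 : Fin (n+1) → ZMod 2) := by
        funext i
        refine Fin.lastCases ?_ ?_ i
        · simp
        · intro j
          simp [Fin.init]
      rw [hz]
      exact Submodule.add_mem _ (h1 _) (Submodule.smul_mem _ _ h2)


/-- every loopless undirected graph on `n` vertices has Boolean
dimension at most `n − 1`. -/
theorem booleanDim_le_card_sub_one {V : Type*} [Fintype V] (G : SimpleGraph V) :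
    booleanDim G ≤ Fintype.card V - 1 := by
  cases isEmpty_or_nonempty V with
  | inl h => exact Nat.sInf_le ⟨fun x => isEmptyElim x, fun x => isEmptyElim x⟩
  | inr h =>
    have hcard : Fintype.card V = (Fintype.card V - 1) + 1 := by
      have := Fintype.card_pos (α := V)
      omega
    obtain ⟨f, hadj, -⟩ := key (Fintype.card V - 1) V hcard G
    exact Nat.sInf_le ⟨f, hadj⟩
end

section
/- For every n ≥ 1, the path on n vertices (the graph whose vertices can be enumerated x_1, …, x_n with edges exactly the pairs {x_j, x_{j+1}} for 1 ≤ j < n) has Boolean dimension exactly n − 1. -/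
section BDimPath

private lemma sum_indicator_one {N : ℕ} (k : ℕ) (hk : k < N) :
    ∑ i : Fin N, (if (i : ℕ) = k then (1 : ZMod 2) else 0) = 1 := by
  rw [Finset.sum_eq_single (⟨k, hk⟩ : Fin N)]
  · simp
  · intro b _ hb
    rw [if_neg]
    intro h
    exact hb (Fin.ext h)
  · intro h; exact absurd (Finset.mem_univ _) h

private lemma dot_eval {n : ℕ} (a b : Fin n) (hab : a ≠ b) :
    ∑ i : Fin (n - 1),
      (if ((i : ℕ) = (a : ℕ) ∨ (i : ℕ) + 1 = (a : ℕ)) then (1 : ZMod 2) else 0) *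
      (if ((i : ℕ) = (b : ℕ) ∨ (i : ℕ) + 1 = (b : ℕ)) then 1 else 0)
    = if ((a : ℕ) + 1 = (b : ℕ) ∨ (b : ℕ) + 1 = (a : ℕ)) then 1 else 0 := by
  have hvab : (a : ℕ) ≠ (b : ℕ) := fun h => hab (Fin.ext h)
  have key : ∀ i : Fin (n - 1),
      (if ((i : ℕ) = (a : ℕ) ∨ (i : ℕ) + 1 = (a : ℕ)) then (1 : ZMod 2) else 0) *
      (if ((i : ℕ) = (b : ℕ) ∨ (i : ℕ) + 1 = (b : ℕ)) then 1 else 0)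
      = if (((i : ℕ) = (a : ℕ) ∧ (a : ℕ) + 1 = (b : ℕ)) ∨
            ((i : ℕ) = (b : ℕ) ∧ (b : ℕ) + 1 = (a : ℕ))) then 1 else 0 := by
    intro i
    split_ifs with h1 h2 h3 h3 h2 h3 h3 <;> first | ring1 | (exfalso; omega)
  rw [Finset.sum_congr rfl (fun i _ => key i)]
  by_cases hadj : (a : ℕ) + 1 = (b : ℕ) ∨ (b : ℕ) + 1 = (a : ℕ)
  · rw [if_pos hadj]
    rcases hadj with h | h
    · have ha : (a : ℕ) < n - 1 := by have := b.isLt; omega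
      rw [Finset.sum_congr rfl (fun i _ => ?_), sum_indicator_one (a : ℕ) ha]
      split_ifs with h1 h2 h2 <;> first | rfl | (exfalso; omega)
    · have hb : (b : ℕ) < n - 1 := by have := a.isLt; omega
      rw [Finset.sum_congr rfl (fun i _ => ?_), sum_indicator_one (b : ℕ) hb]
      split_ifs with h1 h2 h2 <;> first | rfl | (exfalso; omega)
  · rw [if_neg hadj]
    rw [Finset.sum_congr rfl (fun i _ => ?_), Finset.sum_const_zero]
    rw [if_neg]
    omega

end BDimPath

/-- for `n ≥ 1`, the path on `n` vertices has Boolean dimension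
exactly `n − 1`. -/
theorem booleanDim_path {V : Type*} (G : SimpleGraph V) (n : ℕ) (hn : 1 ≤ n)
    (e : Fin n ≃ V)
    (hpath : ∀ a b : Fin n, G.Adj (e a) (e b) ↔
      ((a : ℕ) + 1 = (b : ℕ) ∨ (b : ℕ) + 1 = (a : ℕ))) :
    booleanDim G = n - 1 := by
  have hmem : (n - 1) ∈ {m | ∃ f : V → (Fin m → ZMod 2), ∀ x y : V, x ≠ y →
      (G.Adj x y ↔ ∑ i, f x i * f y i = 1)} := by
    refine ⟨fun x i => if ((i : ℕ) = ((e.symm x : Fin n) : ℕ) ∨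
      (i : ℕ) + 1 = ((e.symm x : Fin n) : ℕ)) then 1 else 0, fun x y hxy => ?_⟩
    have hab : e.symm x ≠ e.symm y := fun h => hxy (by simpa using congrArg e h)
    rw [dot_eval _ _ hab]
    have hx : e (e.symm x) = x := e.apply_symm_apply x
    have hy : e (e.symm y) = y := e.apply_symm_apply y
    rw [← hx, ← hy, hpath]
    simp only [Equiv.symm_apply_apply]
    constructor
    · intro h; rw [if_pos h]
    · intro h
      by_contra hc
      rw [if_neg hc] at h
      exact zero_ne_one h
  refine le_antisymm (Nat.sInf_le hmem) (le_csInf ⟨n - 1, hmem⟩ ?_)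
  rintro m ⟨f, hf⟩
  set g : Fin (n - 1) → (Fin m → ZMod 2) :=
    fun a => f (e (Fin.castLE (n.sub_le 1) a)) with hg
  have hdot : ∀ a b : Fin n, a ≠ b → ∑ i, f (e a) i * f (e b) i =
      if ((a : ℕ) + 1 = (b : ℕ) ∨ (b : ℕ) + 1 = (a : ℕ)) then 1 else 0 := by
    intro a b hab
    have hne : e a ≠ e b := fun h => hab (e.injective h)
    have h1 := (hf (e a) (e b) hne)
    rw [hpath] at h1
    by_cases hadj : (a : ℕ) + 1 = (b : ℕ) ∨ (b : ℕ) + 1 = (a : ℕ)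
    · rw [if_pos hadj]; exact h1.1 hadj
    · rw [if_neg hadj]
      have h2 : ∑ i, f (e a) i * f (e b) i ≠ 1 := fun h => hadj (h1.2 h)
      have : ∀ x : ZMod 2, x = 0 ∨ x = 1 := by decide
      rcases this (∑ i, f (e a) i * f (e b) i) with h | h
      · exact h
      · exact absurd h h2
  have hli : LinearIndependent (ZMod 2) g := by
    rw [Fintype.linearIndependent_iff]
    intro c hc
    by_contra hcn
    push_neg at hcn
    obtain ⟨i0, hi0⟩ := hcn
    set S : Finset (Fin (n - 1)) := Finset.univ.filter (fun a => c a ≠ 0) with hS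
    have hSne : S.Nonempty := ⟨i0, by simp [hS, hi0]⟩
    set b0 : Fin (n - 1) := S.max' hSne with hb0def
    have hb0 : c b0 ≠ 0 := (Finset.mem_filter.mp (S.max'_mem hSne)).2
    have hb0max : ∀ a : Fin (n - 1), c a ≠ 0 → (a : ℕ) ≤ (b0 : ℕ) := by
      intro a ha
      exact S.le_max' a (by simp [hS, ha])
    have hbn : (b0 : ℕ) + 1 < n := by have := b0.isLt; omega
    set b : Fin n := ⟨(b0 : ℕ) + 1, hbn⟩ with hbdef
    have h0 : ∑ a : Fin (n - 1), c a * (∑ i, g a i * f (e b) i) = 0 := by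
      have hswap : ∑ a : Fin (n - 1), c a * (∑ i, g a i * f (e b) i)
          = ∑ i, (∑ a : Fin (n - 1), c a * g a i) * f (e b) i := by
        calc ∑ a : Fin (n - 1), c a * (∑ i, g a i * f (e b) i)
            = ∑ a : Fin (n - 1), ∑ i, c a * g a i * f (e b) i := by
              refine Finset.sum_congr rfl fun a _ => ?_
              rw [Finset.mul_sum]
              exact Finset.sum_congr rfl fun i _ => by ring
          _ = ∑ i, ∑ a : Fin (n - 1), c a * g a i * f (e b) i := Finset.sum_comm
          _ = ∑ i, (∑ a : Fin (n - 1), c a * g a i) * f (e b) i := by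
              exact Finset.sum_congr rfl fun i _ => (Finset.sum_mul _ _ _).symm
      rw [hswap]
      refine Finset.sum_eq_zero fun i _ => ?_
      have := congrFun hc i
      rw [Finset.sum_apply] at this
      simp only [Pi.smul_apply, smul_eq_mul] at this
      rw [Pi.zero_apply] at this
      rw [this, zero_mul]
    have hterm : ∀ a : Fin (n - 1), c a * (∑ i, g a i * f (e b) i)
        = if a = b0 then c b0 else 0 := by
      intro a
      by_cases hca : c a = 0
      · rw [hca, zero_mul]
        split_ifs with h
        · rw [← h, hca]
        · rfl
      · have hale : (a : ℕ) ≤ (b0 : ℕ) := hb0max a hca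
        have hne : Fin.castLE (n.sub_le 1) a ≠ b := by
          intro h
          have := congrArg (Fin.val) h
          simp [hbdef] at this
          omega
        rw [hg]
        rw [hdot _ _ hne]
        have hvb : (b : ℕ) = (b0 : ℕ) + 1 := rfl
        have hva : ((Fin.castLE (n.sub_le 1) a : Fin n) : ℕ) = (a : ℕ) := rfl
        rw [hva, hvb]
        by_cases hab0 : a = b0
        · subst hab0
          simp
        · have hvne : (a : ℕ) ≠ (b0 : ℕ) := fun h => hab0 (Fin.ext h)
          rw [if_neg (by omega), if_neg hab0, mul_zero]
    rw [Finset.sum_congr rfl (fun a _ => hterm a), Finset.sum_ite_eq' Finset.univ b0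
      (fun _ => c b0), if_pos (Finset.mem_univ b0)] at h0
    exact hb0 h0
  have := hli.fintype_card_le_finrank
  rwa [Fintype.card_fin, Module.finrank_fin_fun] at this
end

section
/- Let T be a tournament on a finite vertex set V with n vertices and let P be a spanning path on V (an enumeration x_1, …, x_n of V with edges exactly {x_j, x_{j+1}} for 1 ≤ j < n). Let T' be the tournament obtained from T by reversing exactly the arcs whose endpoint pair is an edge of P. Then the least m such that T' = Inv(T, (X_i)_{i<m}) for some subsets X_i ⊆ V is exactly n − 1; in particular the maximal distance n − 1 between two tournaments on V is attained. -/
/-- Consecutiveness in `Fin n`: the edges of the standard path. -/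
def pathAdj {n : ℕ} (a b : Fin n) : Prop :=
  (a : ℕ) + 1 = (b : ℕ) ∨ (b : ℕ) + 1 = (a : ℕ)


section DistAux
open Classical Matrix
attribute [local instance] Classical.propDecidable

namespace Tournament
variable {V : Type*}

theorem rel_flip {T : Tournament V} {x y : V} (h : x ≠ y) : T.rel y x ↔ ¬ T.rel x y :=
  ⟨fun hr hs => T.asymm x y hs hr, fun hn => (T.total x y h).resolve_left hn⟩

theorem inv_rel_of_mem {T : Tournament V} {X : Set V} {x y : V} (hx : x ∈ X) (hy : y ∈ X) :
    (T.inv X).rel x y ↔ T.rel y x := by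
  simp only [Tournament.inv]; tauto

theorem inv_rel_of_not_mem {T : Tournament V} {X : Set V} {x y : V} (h : ¬(x ∈ X ∧ y ∈ X)) :
    (T.inv X).rel x y ↔ T.rel x y := by
  simp only [Tournament.inv]; tauto

theorem invSeq_rel_iff (Xs : List (Set V)) (T : Tournament V) {x y : V} (h : x ≠ y) :
    (T.invSeq Xs).rel x y ↔
      (Even (Xs.countP (fun X => decide (x ∈ X ∧ y ∈ X))) ↔ T.rel x y) := by
  induction Xs generalizing T with
  | nil => simp [Tournament.invSeq]
  | cons X Xs ih =>
    have hstep : T.invSeq (X :: Xs) = (T.inv X).invSeq Xs := rfl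
    rw [hstep, ih, List.countP_cons]
    by_cases hX : x ∈ X ∧ y ∈ X
    · rw [inv_rel_of_mem hX.1 hX.2, rel_flip h]
      simp only [hX, decide_eq_true_eq, if_pos, and_self, Nat.even_add_one]
      tauto
    · rw [inv_rel_of_not_mem hX]
      simp [hX]

end Tournament

theorem myrank_add_le {K : Type*} [Field K] {k : Type*} [Fintype k]
    (A B : Matrix k k K) : (A + B).rank ≤ A.rank + B.rank := by
  have hr : LinearMap.range (A + B).mulVecLin ≤
      LinearMap.range A.mulVecLin ⊔ LinearMap.range B.mulVecLin := by
    rintro _ ⟨x, rfl⟩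
    rw [Matrix.mulVecLin_add]
    exact Submodule.add_mem_sup (LinearMap.mem_range_self _ x) (LinearMap.mem_range_self _ x)
  exact le_trans (Submodule.finrank_mono hr)
    (Submodule.finrank_add_le_finrank_add_finrank _ _)

theorem myrank_vecMulVec_le {K : Type*} [Field K] {k : Type*} [Fintype k]
    (w v : k → K) : (Matrix.vecMulVec w v).rank ≤ 1 := by
  have hr : LinearMap.range (Matrix.vecMulVec w v).mulVecLin ≤ Submodule.span K {w} := by
    rintro _ ⟨x, rfl⟩
    have hx : (Matrix.vecMulVec w v).mulVecLin x = (v ⬝ᵥ x) • w := by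
      ext i
      simp [Matrix.mulVecLin_apply, Matrix.mulVec, Matrix.vecMulVec_apply, dotProduct,
        Finset.mul_sum, mul_comm, mul_assoc, mul_left_comm]
    rw [hx]
    exact Submodule.smul_mem _ _ (Submodule.mem_span_singleton_self w)
  refine le_trans (Submodule.finrank_mono hr) ?_
  by_cases hw : w = 0
  · rw [hw, Submodule.span_zero_singleton, finrank_bot]; omega
  · rw [finrank_span_singleton hw]

theorem myrank_listSum_le {K : Type*} [Field K] {k : Type*} [Fintype k]
    (L : List (Matrix k k K)) (h : ∀ A ∈ L, A.rank ≤ 1) :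
    L.sum.rank ≤ L.length := by
  induction L with
  | nil => simp [Matrix.rank_zero]
  | cons A L ih =>
    rw [List.sum_cons, List.length_cons]
    refine le_trans (myrank_add_le _ _) ?_
    have := h A List.mem_cons_self
    have := ih (fun B hB => h B (List.mem_cons_of_mem _ hB))
    omega

theorem zmod_cast_eq_zero_iff_even (c : ℕ) : (c : ZMod 2) = 0 ↔ Even c := by
  rw [ZMod.natCast_eq_zero_iff]
  exact even_iff_two_dvd.symm

theorem zmod_cast_eq_one_of_odd {c : ℕ} (h : ¬ Even c) : (c : ZMod 2) = 1 := by
  rw [← ZMod.natCast_mod, Nat.odd_iff.mp (Nat.not_even_iff_odd.mp h)]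
  norm_num

theorem entry_lemma {V : Type*} {n : ℕ} (e : Fin n ≃ V) (Xs : List (Set V)) (i j : Fin n) :
    ((Xs.map fun X => Matrix.vecMulVec (fun k => if e k ∈ X then (1:ZMod 2) else 0)
        (fun k => if e k ∈ X then (1:ZMod 2) else 0)).sum) i j
      = (Xs.countP (fun X => decide (e i ∈ X ∧ e j ∈ X)) : ZMod 2) := by
  induction Xs with
  | nil => simp
  | cons X Xs ih =>
    rw [List.map_cons, List.sum_cons, Matrix.add_apply, ih, List.countP_cons,
      Matrix.vecMulVec_apply]
    by_cases h1 : e i ∈ X <;> by_cases h2 : e j ∈ X <;>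
      simp [h1, h2, add_comm]

theorem count_range_adj (m a : ℕ) (ha : a < m) (b : ℕ) (hb : a + 1 = b) :
    (List.range m).countP (fun j => decide ((a = j ∨ a = j+1) ∧ (b = j ∨ b = j+1))) = 1 := by
  have h1 : (List.range m).countP (fun j => decide ((a = j ∨ a = j+1) ∧ (b = j ∨ b = j+1)))
      = (List.range m).count a := by
    rw [List.count]
    apply List.countP_congr
    intro j _
    simp only [decide_eq_true_eq, beq_iff_eq, decide_eq_decide]
    omega
  rw [h1]
  exact List.count_eq_one_of_mem List.nodup_range (List.mem_range.mpr ha)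


/-- if `T'` is obtained from a tournament `T` on `n` vertices by
reversing exactly the arcs along a spanning path (given by the enumeration `e`),
then the least `m` with `T' = Inv(T, (X_i)_{i<m})` is exactly `n − 1`; in particular
the maximal distance `n − 1` is attained. -/
theorem dist_to_path_reversal {V : Type*} [Fintype V] (n : ℕ) (hcard : Fintype.card V = n)
    (e : Fin n ≃ V) (T T' : Tournament V)
    (hT' : ∀ x y : V, x ≠ y →
      (T'.rel x y ↔
        ((pathAdj (e.symm x) (e.symm y) ∧ T.rel y x) ∨
         (¬ pathAdj (e.symm x) (e.symm y) ∧ T.rel x y)))) :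
    sInf {m | ∃ Xs : List (Set V), Xs.length = m ∧
        ∀ x y, (T.invSeq Xs).rel x y ↔ T'.rel x y} = n - 1 := by
  have hmem : (n - 1) ∈ {m | ∃ Xs : List (Set V), Xs.length = m ∧
      ∀ x y, (T.invSeq Xs).rel x y ↔ T'.rel x y} := by
    refine ⟨(List.range (n-1)).map
      (fun j => {v : V | ((e.symm v : ℕ) = j ∨ (e.symm v : ℕ) = j + 1)}), by simp, ?_⟩
    intro x y
    rcases eq_or_ne x y with rfl | hxy
    · exact iff_of_false ((T.invSeq _).irrefl x) (T'.irrefl x)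
    · rw [Tournament.invSeq_rel_iff _ _ hxy, hT' x y hxy, List.countP_map]
      have hab : ((e.symm x : ℕ)) ≠ ((e.symm y : ℕ)) := by
        intro hc
        exact hxy (by simpa using congrArg e (Fin.ext hc : e.symm x = e.symm y))
      have ha : ((e.symm x : ℕ)) < n := (e.symm x).2
      have hb : ((e.symm y : ℕ)) < n := (e.symm y).2
      have hcongr : ((List.range (n-1)).countP ((fun X => decide (x ∈ X ∧ y ∈ X)) ∘
            (fun j => ({v : V | ((e.symm v : ℕ) = j ∨ (e.symm v : ℕ) = j + 1)} : Set V))))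
          = (List.range (n-1)).countP (fun j =>
              decide ((((e.symm x : ℕ)) = j ∨ ((e.symm x : ℕ)) = j+1) ∧
                (((e.symm y : ℕ)) = j ∨ ((e.symm y : ℕ)) = j+1))) := by
        apply List.countP_congr
        intro j _
        simp only [Function.comp_apply, decide_eq_true_eq]
        exact Iff.rfl
      rw [hcongr]
      by_cases hadj : pathAdj (e.symm x) (e.symm y)
      · have hone : (List.range (n-1)).countP (fun j =>
              decide ((((e.symm x : ℕ)) = j ∨ ((e.symm x : ℕ)) = j+1) ∧
                (((e.symm y : ℕ)) = j ∨ ((e.symm y : ℕ)) = j+1))) = 1 := by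
          rcases hadj with h1 | h1
          · exact count_range_adj (n-1) _ (by omega) _ h1
          · have hswap : ((List.range (n-1)).countP (fun j =>
                decide ((((e.symm x : ℕ)) = j ∨ ((e.symm x : ℕ)) = j+1) ∧
                  (((e.symm y : ℕ)) = j ∨ ((e.symm y : ℕ)) = j+1))))
                = (List.range (n-1)).countP (fun j =>
                decide ((((e.symm y : ℕ)) = j ∨ ((e.symm y : ℕ)) = j+1) ∧
                  (((e.symm x : ℕ)) = j ∨ ((e.symm x : ℕ)) = j+1))) := by
              apply List.countP_congr
              intro j _
              simp only [decide_eq_true_eq]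
              tauto
            rw [hswap]
            exact count_range_adj (n-1) _ (by omega) _ h1
        rw [hone]
        have hne : ¬ Even 1 := by decide
        have hflip : T.rel y x ↔ ¬ T.rel x y := Tournament.rel_flip hxy
        tauto
      · have hzero : (List.range (n-1)).countP (fun j =>
              decide ((((e.symm x : ℕ)) = j ∨ ((e.symm x : ℕ)) = j+1) ∧
                (((e.symm y : ℕ)) = j ∨ ((e.symm y : ℕ)) = j+1))) = 0 := by
          apply List.countP_eq_zero.mpr
          intro j _
          simp only [decide_eq_true_eq]
          have : ¬ (((e.symm x : ℕ)) + 1 = ((e.symm y : ℕ)) ∨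
              ((e.symm y : ℕ)) + 1 = ((e.symm x : ℕ))) := hadj
          omega
        rw [hzero]
        have hev : Even (0 : ℕ) := Even.zero
        tauto
  refine le_antisymm (Nat.sInf_le hmem) (le_csInf ⟨_, hmem⟩ ?_)
  rintro m ⟨Xs, hlen, hrel⟩
  -- lower bound
  set M : Matrix (Fin n) (Fin n) (ZMod 2) :=
    (Xs.map fun X => Matrix.vecMulVec (fun k => if e k ∈ X then (1:ZMod 2) else 0)
      (fun k => if e k ∈ X then (1:ZMod 2) else 0)).sum with hMdef
  have hMrank : M.rank ≤ m := by
    rw [hMdef, ← hlen,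
      ← List.length_map (fun X => Matrix.vecMulVec (fun k => if e k ∈ X then (1:ZMod 2) else 0)
        (fun k => if e k ∈ X then (1:ZMod 2) else 0))]
    apply myrank_listSum_le
    rintro A hA
    rw [List.mem_map] at hA
    obtain ⟨X, -, rfl⟩ := hA
    exact myrank_vecMulVec_le _ _
  have hparity : ∀ i j : Fin n, i ≠ j →
      (¬ Even (Xs.countP (fun X => decide (e i ∈ X ∧ e j ∈ X))) ↔ pathAdj i j) := by
    intro i j hij
    have hxy : e i ≠ e j := fun hc => hij (e.injective hc)
    have h1 := (Tournament.invSeq_rel_iff Xs T hxy).symm.trans (hrel (e i) (e j))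
    have h2 := hT' (e i) (e j) hxy
    rw [Equiv.symm_apply_apply, Equiv.symm_apply_apply] at h2
    rw [h2] at h1
    by_cases hadj : pathAdj i j
    · simp only [hadj, true_and, not_true_eq_false, false_and, or_false] at h1
      rw [Tournament.rel_flip hxy] at h1
      simp only [hadj, iff_true]
      tauto
    · simp only [hadj, false_and, not_false_eq_true, true_and, false_or] at h1
      simp only [hadj, iff_false, not_not]
      tauto
  have hentry : ∀ i j : Fin n,
      M i j = (Xs.countP (fun X => decide (e i ∈ X ∧ e j ∈ X)) : ZMod 2) :=
    fun i j => entry_lemma e Xs i j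
  have hM1 : ∀ i j : Fin n, pathAdj i j → M i j = 1 := by
    intro i j hadj
    have hij : i ≠ j := by
      rcases hadj with h | h <;> · intro hc; subst hc; omega
    rw [hentry]
    exact zmod_cast_eq_one_of_odd ((hparity i j hij).mpr hadj)
  have hM0 : ∀ i j : Fin n, i ≠ j → ¬ pathAdj i j → M i j = 0 := by
    intro i j hij hadj
    rw [hentry]
    refine (zmod_cast_eq_zero_iff_even _).mpr ?_
    by_contra h
    exact hadj ((hparity i j hij).mp h)
  set f : Fin (n-1) → Fin n := fun i => ⟨(i : ℕ), by omega⟩ with hf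
  set g : Fin (n-1) → Fin n := fun j => ⟨(j : ℕ) + 1, by omega⟩ with hg
  have hBlt : ∀ i j : Fin (n-1), i < j → (M.submatrix f g) i j = 0 := by
    intro i j hij
    have hij' : (i : ℕ) < (j : ℕ) := hij
    apply hM0
    · intro hc
      have := congrArg Fin.val hc
      simp only [hf, hg] at this
      omega
    · intro hc
      rcases hc with h | h <;> · simp only [pathAdj, hf, hg] at h; omega
  have hBdiag : ∀ i : Fin (n-1), (M.submatrix f g) i i = 1 := by
    intro i
    exact hM1 _ _ (Or.inl rfl)
  have hdet : (M.submatrix f g).det = 1 := by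
    rw [Matrix.det_of_lowerTriangular (M.submatrix f g)
      (fun i j hij => hBlt i j (OrderDual.toDual_lt_toDual.mp hij))]
    exact Finset.prod_eq_one fun i _ => hBdiag i
  have hrankB : (M.submatrix f g).rank = n - 1 := by
    rw [Matrix.rank_of_isUnit (M.submatrix f g)
      ((Matrix.isUnit_iff_isUnit_det _).mpr (by rw [hdet]; exact isUnit_one))]
    simp
  have hBle : (M.submatrix f g).rank ≤ M.rank := by
    have h1 : M.submatrix f g =
        (1 : Matrix (Fin n) (Fin n) (ZMod 2)).submatrix f (Equiv.refl (Fin n)) * M *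
        (1 : Matrix (Fin n) (Fin n) (ZMod 2)).submatrix (Equiv.refl (Fin n)) g := by
      rw [Matrix.one_submatrix_mul, Matrix.mul_submatrix_one]
      ext i j
      simp
    rw [h1]
    exact le_trans (Matrix.rank_mul_le_left _ _) (Matrix.rank_mul_le_right _ _)
  omega

end DistAux
end

section
/- For every integer n ≥ 4 there exists a tournament T on n vertices whose inversion index satisfies (i(T) : ℝ) ≥ (n−1)/2 − log₂ n. -/
section AuxLemmas

namespace Tournament

theorem ext' {V : Type*} {T S : Tournament V} (h : T.rel = S.rel) : T = S := by
  cases T; cases S; cases h; rfl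

theorem rel_ext {V : Type*} {T S : Tournament V} (h : ∀ x y, T.rel x y ↔ S.rel x y) : T = S :=
  ext' (funext fun x => funext fun y => propext (h x y))

theorem inv_inv' {V : Type*} (T : Tournament V) (X : Set V) : (T.inv X).inv X = T := by
  apply rel_ext; intro x y
  simp only [inv]
  by_cases hx : x ∈ X <;> by_cases hy : y ∈ X <;> tauto

theorem inv_empty {V : Type*} (T : Tournament V) : T.inv (∅ : Set V) = T := by
  apply rel_ext; intro x y
  simp only [inv, Set.mem_empty_iff_false]
  tauto

theorem invSeq_cons {V : Type*} (T : Tournament V) (X : Set V) (Xs : List (Set V)) :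
    T.invSeq (X :: Xs) = (T.inv X).invSeq Xs := rfl

theorem invSeq_append {V : Type*} (T : Tournament V) (Xs Ys : List (Set V)) :
    T.invSeq (Xs ++ Ys) = (T.invSeq Xs).invSeq Ys := List.foldl_append ..

theorem invSeq_singleton {V : Type*} (T : Tournament V) (X : Set V) :
    T.invSeq [X] = T.inv X := rfl

theorem invSeq_reverse_invSeq {V : Type*} (Xs : List (Set V)) :
    ∀ T : Tournament V, (T.invSeq Xs).invSeq Xs.reverse = T := by
  induction Xs with
  | nil => intro T; rfl
  | cons X Xs ih =>
    intro T
    rw [invSeq_cons, List.reverse_cons, invSeq_append, ih (T.inv X), invSeq_singleton, inv_inv']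

instance finiteTournament {n : ℕ} : Finite (Tournament (Fin n)) :=
  Finite.of_injective (fun T => T.rel) (fun _ _ h => ext' h)

open Classical in
noncomputable def badCount {n : ℕ} (T : Tournament (Fin n)) : ℕ :=
  (Finset.univ.filter (fun p : Fin n × Fin n => p.1 < p.2 ∧ T.rel p.2 p.1)).card

theorem acyclic_of_badCount_eq_zero {n : ℕ} {T : Tournament (Fin n)} (h : badCount T = 0) :
    T.IsAcyclic := by
  classical
  have hempty := Finset.card_eq_zero.mp h
  have key : ∀ x y : Fin n, T.rel x y → x < y := by
    intro x y hxy
    rcases lt_trichotomy x y with h' | h' | h'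
    · exact h'
    · exact absurd hxy (h' ▸ T.irrefl x)
    · exfalso
      have hmem : (y, x) ∈ Finset.univ.filter
          (fun p : Fin n × Fin n => p.1 < p.2 ∧ T.rel p.2 p.1) := by
        simp only [Finset.mem_filter, Finset.mem_univ, true_and]
        exact ⟨h', hxy⟩
      rw [hempty] at hmem
      exact absurd hmem (Finset.notMem_empty _)
  intro x y z hxy hyz
  have hxz : x < z := lt_trans (key _ _ hxy) (key _ _ hyz)
  rcases T.total x z (ne_of_lt hxz) with h | h
  · exact h
  · exact absurd (key _ _ h) (not_lt_of_gt hxz)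

theorem exists_invSeq_acyclic {n : ℕ} (T : Tournament (Fin n)) :
    ∃ Xs : List (Set (Fin n)), (T.invSeq Xs).IsAcyclic := by
  classical
  suffices H : ∀ k, ∀ T : Tournament (Fin n), badCount T ≤ k →
      ∃ Xs : List (Set (Fin n)), (T.invSeq Xs).IsAcyclic from H (badCount T) T le_rfl
  intro k
  induction k with
  | zero => exact fun T hT => ⟨[], acyclic_of_badCount_eq_zero (Nat.le_zero.mp hT)⟩
  | succ k ih =>
    intro T hT
    by_cases h0 : badCount T = 0
    · exact ⟨[], acyclic_of_badCount_eq_zero h0⟩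
    · have hne : (Finset.univ.filter
          (fun p : Fin n × Fin n => p.1 < p.2 ∧ T.rel p.2 p.1)).Nonempty := by
        rw [← Finset.card_pos]
        exact Nat.pos_of_ne_zero (by simpa [badCount] using h0)
      obtain ⟨p, hp⟩ := hne
      obtain ⟨a, b⟩ := p
      rw [Finset.mem_filter] at hp
      obtain ⟨-, hab, hba⟩ := hp
      set T' := T.inv ({a, b} : Set (Fin n)) with hT'
      have hsub : (Finset.univ.filter
            (fun p : Fin n × Fin n => p.1 < p.2 ∧ T'.rel p.2 p.1)) ⊆
          (Finset.univ.filter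
            (fun p : Fin n × Fin n => p.1 < p.2 ∧ T.rel p.2 p.1)).erase (a, b) := by
        rintro ⟨x, y⟩ hxy
        rw [Finset.mem_filter] at hxy
        obtain ⟨-, hlt, hrel⟩ := hxy
        rw [Finset.mem_erase, Finset.mem_filter]
        have hmemx : ∀ z : Fin n, z ∈ ({a, b} : Set (Fin n)) ↔ z = a ∨ z = b := by
          intro z; simp [Set.mem_insert_iff]
        rcases hrel with ⟨hy, hx, hrel⟩ | ⟨hor, hrel⟩
        · -- both endpoints in {a,b}: then x = a, y = b, and T.rel x y contradicts hba
          exfalso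
          rw [hmemx] at hx hy
          have hxa : x = a ∧ y = b := by
            rcases hx with h1 | h1 <;> rcases hy with h2 | h2
            · rw [h1, h2] at hlt; exact absurd hlt (lt_irrefl _)
            · exact ⟨h1, h2⟩
            · rw [h1, h2] at hlt; exact absurd hab (not_lt_of_gt hlt)
            · rw [h1, h2] at hlt; exact absurd hlt (lt_irrefl _)
          obtain ⟨rfl, rfl⟩ := hxa
          exact T.asymm _ _ hba hrel
        · refine ⟨?_, Finset.mem_univ _, hlt, hrel⟩
          rintro hpq
          have hx : x = a := congrArg Prod.fst hpq
          have hy : y = b := congrArg Prod.snd hpq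
          subst hx; subst hy
          rcases hor with h | h
          · exact h (by rw [hmemx]; right; rfl)
          · exact h (by rw [hmemx]; left; rfl)
      have hmem : (a, b) ∈ Finset.univ.filter
          (fun p : Fin n × Fin n => p.1 < p.2 ∧ T.rel p.2 p.1) := by
        rw [Finset.mem_filter]; exact ⟨Finset.mem_univ _, hab, hba⟩
      have hlt : badCount T' < badCount T :=
        lt_of_le_of_lt (Finset.card_le_card hsub) (Finset.card_erase_lt_of_mem hmem)
      obtain ⟨Xs, hXs⟩ := ih T' (by omega)
      exact ⟨({a, b} : Set (Fin n)) :: Xs, hXs⟩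

theorem index_spec {n : ℕ} (T : Tournament (Fin n)) :
    ∃ Xs : List (Set (Fin n)), Xs.length = T.index ∧ (T.invSeq Xs).IsAcyclic := by
  obtain ⟨Xs, hXs⟩ := exists_invSeq_acyclic T
  have hne : {m | ∃ Xs : List (Set (Fin n)), Xs.length = m ∧ (T.invSeq Xs).IsAcyclic}.Nonempty :=
    ⟨Xs.length, Xs, rfl, hXs⟩
  exact Nat.sInf_mem hne

theorem invSeq_replicate_empty {V : Type*} (j : ℕ) :
    ∀ S : Tournament V, S.invSeq (List.replicate j (∅ : Set V)) = S := by
  induction j with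
  | zero => intro S; rfl
  | succ j ih => intro S; rw [List.replicate_succ, invSeq_cons, inv_empty]; exact ih S

theorem index_le_pad {n k : ℕ} (T : Tournament (Fin n)) (h : T.index ≤ k) :
    ∃ Xs : List (Set (Fin n)), Xs.length = k ∧ (T.invSeq Xs).IsAcyclic := by
  obtain ⟨Xs, hlen, hac⟩ := index_spec T
  refine ⟨Xs ++ List.replicate (k - T.index) ∅, by simp [hlen]; omega, ?_⟩
  rw [invSeq_append, invSeq_replicate_empty]
  exact hac

open Classical in
noncomputable def rank {n : ℕ} (T : Tournament (Fin n)) (x : Fin n) : ℕ :=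
  (Finset.univ.filter (fun y => T.rel y x)).card

theorem rel_iff_rank_lt {n : ℕ} {T : Tournament (Fin n)} (hT : T.IsAcyclic) (x y : Fin n) :
    T.rel x y ↔ rank T x < rank T y := by
  classical
  have fwd : ∀ a b : Fin n, T.rel a b → rank T a < rank T b := by
    intro a b hab
    apply Finset.card_lt_card
    have hsub : (Finset.univ.filter (fun z => T.rel z a)) ⊆
        (Finset.univ.filter (fun z => T.rel z b)) := by
      intro z hz
      rw [Finset.mem_filter] at hz ⊢
      exact ⟨Finset.mem_univ _, hT z a b hz.2 hab⟩
    rw [Finset.ssubset_iff_of_subset hsub]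
    refine ⟨a, ?_, ?_⟩
    · rw [Finset.mem_filter]; exact ⟨Finset.mem_univ _, hab⟩
    · rw [Finset.mem_filter]; rintro ⟨-, h⟩; exact T.irrefl a h
  constructor
  · exact fwd x y
  · intro h
    by_contra hxy
    rcases eq_or_ne x y with rfl | hne
    · exact lt_irrefl _ h
    · rcases T.total x y hne with h' | h'
      · exact hxy h'
      · exact absurd h (not_lt_of_gt (fwd y x h'))

theorem rank_lt {n : ℕ} (hn : 0 < n) (T : Tournament (Fin n)) (x : Fin n) : rank T x < n := by
  classical
  have hsub : (Finset.univ.filter (fun y => T.rel y x)) ⊆ Finset.univ.erase x := by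
    intro y hy
    rw [Finset.mem_filter] at hy
    exact Finset.mem_erase.mpr ⟨fun h => T.irrefl x (h ▸ hy.2), Finset.mem_univ y⟩
  have := Finset.card_le_card hsub
  rw [Finset.card_erase_of_mem (Finset.mem_univ x), Finset.card_univ, Fintype.card_fin] at this
  unfold rank
  omega

noncomputable def decode {n : ℕ} (f : (Σ j : Fin n, Fin (j : ℕ)) → Bool) : Tournament (Fin n) where
  rel x y := if h : (x : ℕ) < (y : ℕ) then f ⟨y, ⟨(x : ℕ), h⟩⟩ = true
             else if h' : (y : ℕ) < (x : ℕ) then f ⟨x, ⟨(y : ℕ), h'⟩⟩ = false else False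
  irrefl x := by simp
  total x y hxy := by
    have hne : (x : ℕ) ≠ (y : ℕ) := fun h => hxy (Fin.ext h)
    rcases hne.lt_or_gt with h | h
    · rw [dif_pos h, dif_neg (not_lt.mpr h.le), dif_pos h]
      cases f ⟨y, ⟨(x : ℕ), h⟩⟩ <;> simp
    · rw [dif_neg (not_lt.mpr h.le), dif_pos h, dif_pos h]
      cases f ⟨x, ⟨(y : ℕ), h⟩⟩ <;> simp
  asymm x y := by
    rcases lt_trichotomy (x : ℕ) (y : ℕ) with h | h | h
    · rw [dif_pos h, dif_neg (not_lt.mpr h.le), dif_pos h]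
      intro h1 h2; rw [h1] at h2; exact Bool.noConfusion h2
    · rw [dif_neg (not_lt.mpr h.le), dif_neg (not_lt.mpr h.ge)]
      exact fun h1 => absurd h1 id
    · rw [dif_neg (not_lt.mpr h.le), dif_pos h, dif_pos h]
      intro h1 h2; rw [h2] at h1; exact Bool.noConfusion h1

theorem decode_injective {n : ℕ} :
    Function.Injective (decode (n := n)) := by
  intro f g hfg
  funext p
  obtain ⟨j, i⟩ := p
  set x : Fin n := ⟨(i : ℕ), lt_trans i.isLt j.isLt⟩ with hx
  have hlt : (x : ℕ) < (j : ℕ) := i.isLt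
  have h1 : (decode f).rel x j ↔ (decode g).rel x j := by rw [hfg]
  simp only [decode, dif_pos hlt] at h1
  have hij : (⟨(x : ℕ), hlt⟩ : Fin (j : ℕ)) = i := Fin.ext rfl
  rw [hij] at h1
  cases hf : f ⟨j, i⟩ <;> cases hg : g ⟨j, i⟩ <;> simp [hf, hg] at h1 ⊢

end Tournament

end AuxLemmas
section Counting

open Tournament

theorem tournament_card_lower (n : ℕ) :
    2 ^ (n * (n - 1) / 2) ≤ Nat.card (Tournament (Fin n)) := by
  classical
  have h1 : Nat.card ((Σ j : Fin n, Fin (j : ℕ)) → Bool) ≤ Nat.card (Tournament (Fin n)) :=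
    Nat.card_le_card_of_injective _ decode_injective
  have h2 : Nat.card ((Σ j : Fin n, Fin (j : ℕ)) → Bool) = 2 ^ (n * (n - 1) / 2) := by
    rw [Nat.card_eq_fintype_card, Fintype.card_fun, Fintype.card_bool, Fintype.card_sigma]
    congr 1
    simp only [Fintype.card_fin]
    rw [Fin.sum_univ_eq_sum_range (fun i => i) n, Finset.sum_range_id]
  omega

theorem tournament_card_upper (n k : ℕ) (hn : 0 < n)
    (h : ∀ T : Tournament (Fin n), T.index ≤ k) :
    Nat.card (Tournament (Fin n)) ≤ n ^ n * 2 ^ (n * k) := by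
  classical
  set A := {T : Tournament (Fin n) // T.IsAcyclic}
  have hsurj : Function.Surjective
      (fun p : A × (Fin k → Set (Fin n)) => p.1.1.invSeq (List.ofFn p.2)) := by
    intro T
    obtain ⟨Xs, hlen, hac⟩ := index_le_pad T (h T)
    have hlenr : Xs.reverse.length = k := by rw [List.length_reverse]; exact hlen
    refine ⟨⟨⟨T.invSeq Xs, hac⟩, fun i => Xs.reverse.get (Fin.cast hlenr.symm i)⟩, ?_⟩
    have hofn : List.ofFn (fun i : Fin k => Xs.reverse.get (Fin.cast hlenr.symm i))
        = Xs.reverse := by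
      subst hlenr
      exact List.ofFn_get Xs.reverse
    simp only [hofn]
    exact invSeq_reverse_invSeq Xs T
  have h1 : Nat.card (Tournament (Fin n)) ≤ Nat.card (A × (Fin k → Set (Fin n))) :=
    Nat.card_le_card_of_surjective _ hsurj
  have h2 : Nat.card A ≤ n ^ n := by
    have hinj : Function.Injective
        (fun T : A => (fun x => (⟨rank T.1 x, rank_lt hn T.1 x⟩ : Fin n))) := by
      intro S T hST
      apply Subtype.ext
      apply rel_ext
      intro x y
      have hr : ∀ z, rank S.1 z = rank T.1 z := by
        intro z
        have := congrFun hST z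
        simpa using congrArg Fin.val this
      rw [rel_iff_rank_lt S.2, rel_iff_rank_lt T.2, hr, hr]
    calc Nat.card A ≤ Nat.card (Fin n → Fin n) := Nat.card_le_card_of_injective _ hinj
      _ = n ^ n := by rw [Nat.card_eq_fintype_card, Fintype.card_fun, Fintype.card_fin]
  have h3 : Nat.card (Fin k → Set (Fin n)) = 2 ^ (n * k) := by
    rw [Nat.card_eq_fintype_card, Fintype.card_fun, Fintype.card_set, Fintype.card_fin,
      Fintype.card_fin, ← pow_mul]
  calc Nat.card (Tournament (Fin n)) ≤ Nat.card (A × (Fin k → Set (Fin n))) := h1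
    _ = Nat.card A * Nat.card (Fin k → Set (Fin n)) := Nat.card_prod _ _
    _ ≤ n ^ n * 2 ^ (n * k) := by rw [h3]; exact Nat.mul_le_mul_right _ h2

end Counting
/-- for every `n ≥ 4` there is a tournament on `n` vertices whose
inversion index is at least `(n−1)/2 − log₂ n`. -/
theorem exists_index_ge (n : ℕ) (hn : 4 ≤ n) :
    ∃ T : Tournament (Fin n),
      ((n : ℝ) - 1) / 2 - Real.logb 2 (n : ℝ) ≤ (T.index : ℝ) := by
  set B : ℝ := ((n : ℝ) - 1) / 2 - Real.logb 2 (n : ℝ) with hBdef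
  by_cases hB : B ≤ 0
  · exact ⟨linear n, hB.trans (Nat.cast_nonneg _)⟩
  push_neg at hB
  by_contra hcon
  push_neg at hcon
  set m := ⌈B⌉₊ with hmdef
  have hm1 : 1 ≤ m := Nat.one_le_iff_ne_zero.mpr (by
    intro h0
    have := Nat.ceil_eq_zero.mp (hmdef ▸ h0)
    linarith)
  have hk : ∀ T : Tournament (Fin n), T.index ≤ m - 1 := by
    intro T
    have h1 : (T.index : ℝ) < B := hcon T
    have h2 : T.index < m := Nat.lt_ceil.mpr h1
    omega
  have hcard : 2 ^ (n * (n - 1) / 2) ≤ n ^ n * 2 ^ (n * (m - 1)) :=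
    le_trans (tournament_card_lower n) (tournament_card_upper n (m - 1) (by omega) hk)
  -- cast to real and take log base 2
  set a : ℕ := n * (n - 1) / 2 with hadef
  have h2a : 2 * a = n * (n - 1) := by
    have heven : Even (n * (n - 1)) := by
      rcases Nat.even_or_odd n with h | h
      · exact h.mul_right _
      · refine Even.mul_left ?_ _
        rcases h with ⟨c, hc⟩
        exact ⟨c, by omega⟩
    rcases heven with ⟨c, hc⟩
    omega
  have hcast : (2 : ℝ) ^ a ≤ (n : ℝ) ^ n * 2 ^ (n * (m - 1)) := by
    have := hcard
    exact_mod_cast this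
  have hnpos : (0 : ℝ) < n := by positivity
  have hlog : (a : ℝ) ≤ (n : ℝ) * Real.logb 2 n + (n * (m - 1) : ℕ) := by
    have hL : Real.logb 2 ((2 : ℝ) ^ a) = a := by
      rw [Real.logb_pow, Real.logb_self_eq_one (by norm_num)]
      ring
    have hR : Real.logb 2 ((n : ℝ) ^ n * 2 ^ (n * (m - 1)))
        = (n : ℝ) * Real.logb 2 n + (n * (m - 1) : ℕ) := by
      rw [Real.logb_mul (by positivity) (by positivity), Real.logb_pow, Real.logb_pow,
        Real.logb_self_eq_one (by norm_num)]
      ring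
    have := (Real.logb_le_logb (b := 2) (by norm_num) (by positivity) (by positivity)).mpr hcast
    rwa [hL, hR] at this
  have hacast : 2 * (a : ℝ) = (n : ℝ) * ((n : ℝ) - 1) := by
    have h' : ((2 * a : ℕ) : ℝ) = ((n * (n - 1) : ℕ) : ℝ) := by rw [h2a]
    push_cast [Nat.cast_sub (show 1 ≤ n by omega)] at h'
    linarith
  have hmcast : ((n * (m - 1) : ℕ) : ℝ) = (n : ℝ) * ((m : ℝ) - 1) := by
    push_cast [Nat.cast_sub hm1]
    ring
  rw [hmcast] at hlog
  -- divide by n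
  have hfinal : ((n : ℝ) - 1) / 2 ≤ Real.logb 2 n + ((m : ℝ) - 1) := by
    nlinarith [hlog, hacast, hnpos]
  have hceil : (m : ℝ) < B + 1 := Nat.ceil_lt_add_one hB.le
  rw [hBdef] at hceil
  linarith
end

section
/- Let m ∈ ℕ and let T be a finite tournament with i(T) > m such that i(T − x) ≤ m for every vertex x of T (i.e. T is a bound of the class of finite tournaments of index at most m). Then T is acyclically indecomposable: T has no acyclic interval with more than one element. -/
section Aux

variable {V : Type*}

lemma Tournament.ext'_s17 {T1 T2 : Tournament V} (h : ∀ a b, T1.rel a b ↔ T2.rel a b) :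
    T1 = T2 := by
  cases T1; cases T2
  simp only [Tournament.mk.injEq]
  funext a b
  exact propext (h a b)

/-- A finite set with a transitive tournament relation has a top element. -/
lemma tour_exists_top (T : Tournament V) :
    ∀ s : Finset V, (∀ a b c, a ∈ s → b ∈ s → c ∈ s → T.rel a b → T.rel b c → T.rel a c) →
      s.Nonempty → ∃ x ∈ s, ∀ z ∈ s, z ≠ x → T.rel z x := by
  classical
  intro s
  induction s using Finset.induction_on with
  | empty => intro _ h; exact absurd h (by simp)
  | @insert a s ha ih =>
    intro htr _
    by_cases hs : s.Nonempty
    · obtain ⟨x, hxs, hx⟩ := ih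
        (fun u v w hu hv hw => htr u v w (Finset.mem_insert_of_mem hu)
          (Finset.mem_insert_of_mem hv) (Finset.mem_insert_of_mem hw)) hs
      have hax : a ≠ x := fun h => ha (h ▸ hxs)
      rcases T.total a x hax with hax' | hxa
      · refine ⟨x, Finset.mem_insert_of_mem hxs, fun z hz hzx => ?_⟩
        rcases Finset.mem_insert.mp hz with rfl | hzs
        · exact hax'
        · exact hx z hzs hzx
      · refine ⟨a, Finset.mem_insert_self a s, fun z hz hza => ?_⟩
        rcases Finset.mem_insert.mp hz with rfl | hzs
        · exact absurd rfl hza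
        · by_cases hzx : z = x
          · exact hzx ▸ hxa
          · exact htr z x a (Finset.mem_insert_of_mem hzs) (Finset.mem_insert_of_mem hxs)
              (Finset.mem_insert_self a s) (hx z hzs hzx) hxa
    · refine ⟨a, Finset.mem_insert_self a s, fun z hz hza => ?_⟩
      rcases Finset.mem_insert.mp hz with rfl | hzs
      · exact absurd rfl hza
      · exact absurd ⟨z, hzs⟩ hs

/-- Every finite tournament admits a sequence of inversions making it acyclic. -/
lemma exists_acyclic_list [Fintype V] (T : Tournament V) :
    ∃ Xs : List (Set V), (T.invSeq Xs).IsAcyclic := by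
  classical
  obtain ⟨e⟩ : Nonempty (V ≃ Fin (Fintype.card V)) := ⟨Fintype.equivFin V⟩
  suffices h : ∀ (k : ℕ) (T : Tournament V),
      (Finset.univ.filter fun p : V × V => e p.1 < e p.2 ∧ ¬ T.rel p.1 p.2).card = k →
      ∃ Xs : List (Set V), (T.invSeq Xs).IsAcyclic from h _ T rfl
  intro k
  induction k with
  | zero =>
    intro T hcard
    have hgood : ∀ a b : V, e a < e b → T.rel a b := by
      intro a b hlt
      by_contra hrel
      have : (a, b) ∈ (Finset.univ.filter fun p : V × V => e p.1 < e p.2 ∧ ¬ T.rel p.1 p.2) := by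
        simp [hlt, hrel]
      rw [Finset.card_eq_zero.mp hcard] at this
      exact absurd this (Finset.notMem_empty _)
    refine ⟨[], ?_⟩
    have hiff : ∀ a b : V, T.rel a b ↔ e a < e b := by
      intro a b
      refine ⟨fun hab => ?_, hgood a b⟩
      rcases lt_trichotomy (e a) (e b) with h | h | h
      · exact h
      · exact absurd (e.injective h ▸ hab) (T.irrefl a)
      · exact absurd (hgood b a h) (T.asymm a b hab)
    intro a b c hab hbc
    exact (hiff a c).mpr (lt_trans ((hiff a b).mp hab) ((hiff b c).mp hbc))
  | succ k ih =>
    intro T hcard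
    have hne : (Finset.univ.filter fun p : V × V => e p.1 < e p.2 ∧ ¬ T.rel p.1 p.2).Nonempty := by
      rw [← Finset.card_pos, hcard]; omega
    obtain ⟨p, hp⟩ := hne
    have hpmem := hp
    rw [Finset.mem_filter] at hp
    obtain ⟨-, hlt, hrel⟩ := hp
    have hpne : p.1 ≠ p.2 := fun h => by rw [h] at hlt; exact lt_irrefl _ hlt
    have hrel21 : T.rel p.2 p.1 := (T.total p.2 p.1 hpne.symm).resolve_right hrel
    set P : Set V := {p.1, p.2} with hP
    set T' := T.inv P with hT'
    have hrelT' : ∀ a b : V, (T'.rel a b ↔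
        (a ∈ P ∧ b ∈ P ∧ T.rel b a) ∨ ((a ∉ P ∨ b ∉ P) ∧ T.rel a b)) := fun a b => Iff.rfl
    have hset : (Finset.univ.filter fun q : V × V => e q.1 < e q.2 ∧ ¬ T'.rel q.1 q.2)
        = (Finset.univ.filter fun q : V × V => e q.1 < e q.2 ∧ ¬ T.rel q.1 q.2).erase p := by
      ext q
      simp only [Finset.mem_filter, Finset.mem_erase, Finset.mem_univ, true_and]
      by_cases hqlt : e q.1 < e q.2
      · have hqne : q.1 ≠ q.2 := fun h => by rw [h] at hqlt; exact lt_irrefl _ hqlt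
        by_cases hqp : q = p
        · subst hqp
          have : T'.rel q.1 q.2 := Or.inl ⟨Or.inl rfl, Or.inr rfl, hrel21⟩
          simp [this]
        · have hmem : ¬ (q.1 ∈ P ∧ q.2 ∈ P) := by
            rintro ⟨h1, h2⟩
            simp only [hP, Set.mem_insert_iff, Set.mem_singleton_iff] at h1 h2
            rcases h1 with h1 | h1 <;> rcases h2 with h2 | h2
            · exact hqne (h1.trans h2.symm)
            · exact hqp (Prod.ext h1 h2)
            · rw [h1, h2] at hqlt; exact absurd hlt (lt_asymm hqlt)
            · exact hqne (h1.trans h2.symm)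
          have hT'q : T'.rel q.1 q.2 ↔ T.rel q.1 q.2 := by
            rw [hrelT']
            constructor
            · rintro (⟨h1, h2, -⟩ | ⟨-, h⟩)
              · exact absurd ⟨h1, h2⟩ hmem
              · exact h
            · intro h; exact Or.inr ⟨not_and_or.mp hmem, h⟩
          simp [hqlt, hqp, hT'q]
      · simp [hqlt]
    have hcard' : (Finset.univ.filter fun q : V × V =>
        e q.1 < e q.2 ∧ ¬ T'.rel q.1 q.2).card = k := by
      rw [hset, Finset.card_erase_of_mem hpmem, hcard]
      omega
    obtain ⟨Xs, hXs⟩ := ih T' hcard'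
    exact ⟨P :: Xs, hXs⟩

/-- Lifting a set of vertices of `T − x` to a set of vertices of `T`,
letting `x` behave like `y`. -/
def liftSet (x y : V) (hyx : y ≠ x) (S : Set {z : V // z ≠ x}) : Set V :=
  {v | (v = x ∧ ⟨y, hyx⟩ ∈ S) ∨ ∃ h : v ≠ x, ⟨v, h⟩ ∈ S}

lemma mem_liftSet_ne {x y : V} {hyx : y ≠ x} {v : V} (h : v ≠ x) {S : Set {z : V // z ≠ x}} :
    v ∈ liftSet x y hyx S ↔ ⟨v, h⟩ ∈ S := by
  constructor
  · rintro (⟨rfl, -⟩ | ⟨h', hS⟩)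
    · exact absurd rfl h
    · exact hS
  · intro hS; exact Or.inr ⟨h, hS⟩

lemma mem_liftSet_x {x y : V} {hyx : y ≠ x} {S : Set {z : V // z ≠ x}} :
    x ∈ liftSet x y hyx S ↔ y ∈ liftSet x y hyx S := by
  have h1 : x ∈ liftSet x y hyx S ↔ ⟨y, hyx⟩ ∈ S := by
    constructor
    · rintro (⟨-, hS⟩ | ⟨h', -⟩)
      · exact hS
      · exact absurd rfl h'
    · intro hS; exact Or.inl ⟨rfl, hS⟩
  rw [h1, mem_liftSet_ne hyx]

/-- One-step commutation: erasing `x` after inverting the lifted set equals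
inverting the original set after erasing `x`. -/
lemma erase_inv_lift (T : Tournament V) (x y : V) (hyx : y ≠ x) (S : Set {z : V // z ≠ x}) :
    (T.inv (liftSet x y hyx S)).erase x = (T.erase x).inv S := by
  apply Tournament.ext'_s17
  intro a b
  show (T.inv (liftSet x y hyx S)).rel a b ↔ _
  have ha : (a : V) ∈ liftSet x y hyx S ↔ a ∈ S := by
    rw [mem_liftSet_ne a.2]
  have hb : (b : V) ∈ liftSet x y hyx S ↔ b ∈ S := by
    rw [mem_liftSet_ne b.2]
  show ((a : V) ∈ liftSet x y hyx S ∧ (b : V) ∈ liftSet x y hyx S ∧ T.rel b a) ∨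
      (((a : V) ∉ liftSet x y hyx S ∨ (b : V) ∉ liftSet x y hyx S) ∧ T.rel a b) ↔
      (a ∈ S ∧ b ∈ S ∧ T.rel (b : V) (a : V)) ∨ ((a ∉ S ∨ b ∉ S) ∧ T.rel (a : V) (b : V))
  rw [ha, hb]

/-- `x` and `y` are twins in `T`. -/
def Twin (T : Tournament V) (x y : V) : Prop :=
  ∀ z, z ≠ x → z ≠ y → (T.rel x z ↔ T.rel y z) ∧ (T.rel z x ↔ T.rel z y)

lemma twin_inv_lift (T : Tournament V) (x y : V) (hyx : y ≠ x) (S : Set {z : V // z ≠ x})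
    (hT : Twin T x y) : Twin (T.inv (liftSet x y hyx S)) x y := by
  intro z hzx hzy
  obtain ⟨h1, h2⟩ := hT z hzx hzy
  have hx : x ∈ liftSet x y hyx S ↔ y ∈ liftSet x y hyx S := mem_liftSet_x
  constructor
  · show (x ∈ _ ∧ z ∈ _ ∧ T.rel z x) ∨ ((x ∉ _ ∨ z ∉ _) ∧ T.rel x z) ↔
        (y ∈ _ ∧ z ∈ _ ∧ T.rel z y) ∨ ((y ∉ _ ∨ z ∉ _) ∧ T.rel y z)
    tauto
  · show (z ∈ _ ∧ x ∈ _ ∧ T.rel x z) ∨ ((z ∉ _ ∨ x ∉ _) ∧ T.rel z x) ↔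
        (z ∈ _ ∧ y ∈ _ ∧ T.rel y z) ∨ ((z ∉ _ ∨ y ∉ _) ∧ T.rel z y)
    tauto

lemma invSeq_cons (T : Tournament V) (S : Set V) (Xs : List (Set V)) :
    T.invSeq (S :: Xs) = (T.inv S).invSeq Xs := rfl

lemma twin_invSeq_lift (x y : V) (hyx : y ≠ x) (Xs : List (Set {z : V // z ≠ x})) :
    ∀ T : Tournament V, Twin T x y → Twin (T.invSeq (Xs.map (liftSet x y hyx))) x y := by
  induction Xs with
  | nil => intro T hT; exact hT
  | cons S Xs ih =>
    intro T hT
    rw [List.map_cons, invSeq_cons]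
    exact ih _ (twin_inv_lift T x y hyx S hT)

lemma erase_invSeq_lift (x y : V) (hyx : y ≠ x) (Xs : List (Set {z : V // z ≠ x})) :
    ∀ T : Tournament V,
      (T.invSeq (Xs.map (liftSet x y hyx))).erase x = (T.erase x).invSeq Xs := by
  induction Xs with
  | nil => intro T; rfl
  | cons S Xs ih =>
    intro T
    rw [List.map_cons, invSeq_cons, invSeq_cons, ih, erase_inv_lift]

/-- If `x` and `y` are twins, acyclicity of `T − x` gives acyclicity of `T`. -/
lemma acyclic_of_twin (T : Tournament V) (x y : V) (hyx : y ≠ x)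
    (hP : Twin T x y) (hac : (T.erase x).IsAcyclic) : T.IsAcyclic := by
  have hac' : ∀ a b c : V, a ≠ x → b ≠ x → c ≠ x → T.rel a b → T.rel b c → T.rel a c :=
    fun a b c ha hb hc hab hbc => hac ⟨a, ha⟩ ⟨b, hb⟩ ⟨c, hc⟩ hab hbc
  intro a b c hab hbc
  by_cases hax : a = x
  · rw [hax] at hab ⊢
    have hbx : b ≠ x := fun h => T.irrefl x (h ▸ hab)
    have hcx : c ≠ x := fun h => T.asymm x b hab (by rw [← h]; exact hbc)
    by_cases hcy : c = y
    · rw [hcy] at hbc ⊢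
      by_cases hby : b = y
      · rw [hby] at hab; exact hab
      · exact absurd ((hP b hbx hby).1.mp hab) (T.asymm b y hbc)
    · by_cases hby : b = y
      · rw [hby] at hab hbc
        exact (hP c hcx hcy).1.mpr hbc
      · exact (hP c hcx hcy).1.mpr (hac' y b c hyx hbx hcx ((hP b hbx hby).1.mp hab) hbc)
  · by_cases hbx : b = x
    · rw [hbx] at hab hbc
      have hcx : c ≠ x := fun h => T.irrefl x (h ▸ hbc)
      by_cases hay : a = y
      · rw [hay] at hab ⊢
        by_cases hcy : c = y
        · rw [hcy] at hbc ⊢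
          exact absurd hbc (T.asymm y x hab)
        · exact (hP c hcx hcy).1.mp hbc
      · have h1 : T.rel a y := (hP a hax hay).2.mp hab
        by_cases hcy : c = y
        · rw [hcy]; exact h1
        · exact hac' a y c hax hyx hcx h1 ((hP c hcx hcy).1.mp hbc)
    · by_cases hcx : c = x
      · rw [hcx] at hbc ⊢
        by_cases hby : b = y
        · rw [hby] at hab hbc
          have hay : a ≠ y := fun h => T.irrefl y (h ▸ hab)
          exact (hP a hax hay).2.mpr hab
        · have h1 : T.rel b y := (hP b hbx hby).2.mp hbc
          by_cases hay : a = y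
          · rw [hay] at hab
            exact absurd h1 (T.asymm y b hab)
          · exact (hP a hax hay).2.mpr (hac' a b y hax hbx hyx hab h1)
      · exact hac' a b c hax hbx hcx hab hbc

end Aux

/-- a bound of the class of finite tournaments of index at most `m`
(a finite tournament `T` with `i(T) > m` and `i(T − x) ≤ m` for every vertex `x`)
is acyclically indecomposable: every acyclic interval of `T` has at most one
element. -/
theorem bound_is_acyclically_indecomposable {V : Type*} [Fintype V] (m : ℕ)
    (T : Tournament V) (h1 : m < T.index) (h2 : ∀ x : V, (T.erase x).index ≤ m) :
    ∀ X : Set V, T.IsInterval X → (T.restrict X).IsAcyclic → X.Subsingleton := by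
  classical
  intro X hint hac
  by_contra hns
  rw [Set.not_subsingleton_iff] at hns
  obtain ⟨a, ha, b, hb, hab⟩ := hns
  -- transitivity of T on X
  have htr : ∀ u v w : V, u ∈ X → v ∈ X → w ∈ X → T.rel u v → T.rel v w → T.rel u w :=
    fun u v w hu hv hw huv hvw => hac ⟨u, hu⟩ ⟨v, hv⟩ ⟨w, hw⟩ huv hvw
  -- top element x of X
  obtain ⟨x, hxX, hx⟩ := tour_exists_top T X.toFinset
    (fun u v w hu hv hw => htr u v w (Set.mem_toFinset.mp hu) (Set.mem_toFinset.mp hv)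
      (Set.mem_toFinset.mp hw))
    ⟨a, Set.mem_toFinset.mpr ha⟩
  rw [Set.mem_toFinset] at hxX
  have hx' : ∀ z ∈ X, z ≠ x → T.rel z x := fun z hz => hx z (Set.mem_toFinset.mpr hz)
  -- second element y : top of X \ {x}
  have hne2 : ∃ c ∈ X, c ≠ x := by
    by_cases hax : a = x
    · exact ⟨b, hb, fun h => hab (hax ▸ h ▸ rfl)⟩
    · exact ⟨a, ha, hax⟩
  obtain ⟨c, hcX, hcx⟩ := hne2
  obtain ⟨y, hyF, hy⟩ := tour_exists_top T ((X \ {x}).toFinset)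
    (fun u v w hu hv hw => by
      rw [Set.mem_toFinset] at hu hv hw
      exact htr u v w hu.1 hv.1 hw.1)
    ⟨c, Set.mem_toFinset.mpr ⟨hcX, hcx⟩⟩
  rw [Set.mem_toFinset] at hyF
  obtain ⟨hyX, hyx'⟩ := hyF
  have hyx : y ≠ x := hyx'
  have hy' : ∀ z ∈ X, z ≠ x → z ≠ y → T.rel z y := fun z hz hzx hzy =>
    hy z (Set.mem_toFinset.mpr ⟨hz, hzx⟩) hzy
  -- x and y are twins in T
  have htwin : Twin T x y := by
    intro z hzx hzy
    by_cases hzX : z ∈ X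
    · have h1 : T.rel z x := hx' z hzX hzx
      have h2 : T.rel z y := hy' z hzX hzx hzy
      exact ⟨⟨fun h => absurd h (T.asymm z x h1),
              fun h => absurd h (T.asymm z y h2)⟩,
             ⟨fun _ => h2, fun _ => h1⟩⟩
    · rcases hint z hzX with h | h
      · exact ⟨⟨fun _ => h y hyX, fun _ => h x hxX⟩,
               ⟨fun hh => absurd (h x hxX) (T.asymm z x hh),
                fun hh => absurd (h y hyX) (T.asymm z y hh)⟩⟩
      · exact ⟨⟨fun hh => absurd (h x hxX) (T.asymm x z hh),
                fun hh => absurd (h y hyX) (T.asymm y z hh)⟩,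
               ⟨fun _ => h y hyX, fun _ => h x hxX⟩⟩
  -- get an optimal inversion sequence for T − x
  have hSne : {n | ∃ Xs : List (Set {z : V // z ≠ x}), Xs.length = n ∧
      ((T.erase x).invSeq Xs).IsAcyclic}.Nonempty := by
    obtain ⟨Xs, hXs⟩ := exists_acyclic_list (T.erase x)
    exact ⟨Xs.length, Xs, rfl, hXs⟩
  have hmem := Nat.sInf_mem hSne
  obtain ⟨Xs, hlen, hXsac⟩ := hmem
  -- lift the sequence to V
  have herase := erase_invSeq_lift x y hyx Xs T
  have htwin' := twin_invSeq_lift x y hyx Xs T htwin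
  have hac2 : (T.invSeq (Xs.map (liftSet x y hyx))).IsAcyclic := by
    apply acyclic_of_twin _ x y hyx htwin'
    rw [herase]; exact hXsac
  have hmem2 : Xs.length ∈ {n | ∃ Ys : List (Set V), Ys.length = n ∧
      (T.invSeq Ys).IsAcyclic} := ⟨Xs.map (liftSet x y hyx), by simp, hac2⟩
  have hle : T.index ≤ Xs.length := Nat.sInf_le hmem2
  rw [hlen] at hle
  exact absurd h1 (not_lt.mpr (le_trans hle (h2 x)))
end

section
/- Let T be a finite tournament with at least 2 vertices. Then T is acyclically indecomposable with i(T) ≤ 1 if and only if T is isomorphic to U_{2n+1}, 2̲(1̲, U_{2n+1}), 2̲(U_{2n+1}, 1̲), or 3̲(1̲, U_{2n+1}, 1̲) for some n ≥ 1, where U_{2n+1} := Inv(2n+1̲, 2ℕ_{<n+1}). -/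
namespace Tournament

/-- A tournament is acyclically indecomposable if it has no acyclic interval with
more than one element. -/
def AcyclicallyIndecomposable {V : Type*} (T : Tournament V) : Prop :=
  ∀ X : Set V, T.IsInterval X → (T.restrict X).IsAcyclic → X.Subsingleton

/-- Adjoin a new vertex dominating all vertices of `T`: the lexicographic sum
`2̲(1̲, T)`. -/
def cone {V : Type*} (T : Tournament V) : Tournament (Option V) where
  rel x y := y.elim False (fun b => x.elim True (fun a => T.rel a b))
  irrefl x := by cases x <;> simp [Option.elim] <;> exact T.irrefl _
  total x y hxy := by
    cases x with
    | none =>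
      cases y with
      | none => exact absurd rfl hxy
      | some b => left; trivial
    | some a =>
      cases y with
      | none => right; trivial
      | some b =>
        have hab : a ≠ b := fun h => hxy (by rw [h])
        rcases T.total a b hab with h | h
        · left; exact h
        · right; exact h
  asymm x y h hc := by
    cases x <;> cases y
    · exact h
    · exact hc
    · exact h
    · exact T.asymm _ _ h hc

/-- Adjoin a new vertex dominated by all vertices of `T`: the lexicographic sum
`2̲(T, 1̲)`. -/
def cocone {V : Type*} (T : Tournament V) : Tournament (Option V) :=
  (T.dual.cone).dual

end Tournament

/-- `U_{2n+1} := Inv(2n+1̲, 2ℕ_{<n+1})`. -/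
def U (n : ℕ) : Tournament (Fin (2 * n + 1)) :=
  (linear (2 * n + 1)).inv (evensLT (n + 1))

/-! ### Auxiliary development -/

namespace Tournament

variable {V : Type*} {W : Type*}

theorem inv_rel (T : Tournament V) (X : Set V) (x y : V) :
    (T.inv X).rel x y ↔
      (x ∈ X ∧ y ∈ X ∧ T.rel y x) ∨ ((x ∉ X ∨ y ∉ X) ∧ T.rel x y) := Iff.rfl

theorem inv_inv_rel (T : Tournament V) (X : Set V) (x y : V) :
    ((T.inv X).inv X).rel x y ↔ T.rel x y := by
  simp only [inv_rel]
  by_cases hx : x ∈ X <;> by_cases hy : y ∈ X <;> tauto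

theorem inv_subsingleton_rel {T : Tournament V} {A : Set V} (hA : A.Subsingleton) (x y : V) :
    (T.inv A).rel x y ↔ T.rel x y := by
  rw [inv_rel]
  by_cases hx : x ∈ A
  · by_cases hy : y ∈ A
    · have hxy : x = y := hA hx hy
      subst hxy
      have := T.irrefl x; tauto
    · tauto
  · tauto

theorem Iso.refl (T : Tournament V) : T.Iso T := ⟨Equiv.refl V, fun _ _ => Iff.rfl⟩

theorem Iso.symm {S : Tournament V} {T : Tournament W} (h : S.Iso T) : T.Iso S := by
  obtain ⟨e, he⟩ := h
  exact ⟨e.symm, fun x y => by rw [he (e.symm x) (e.symm y), e.apply_symm_apply,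
    e.apply_symm_apply]⟩

theorem Iso.trans {U₁ : Type*} {S : Tournament V} {T : Tournament W} {R : Tournament U₁}
    (h1 : S.Iso T) (h2 : T.Iso R) : S.Iso R := by
  obtain ⟨e1, he1⟩ := h1
  obtain ⟨e2, he2⟩ := h2
  exact ⟨e1.trans e2, fun x y => (he1 x y).trans (he2 _ _)⟩

theorem isAcyclic_of_rel_map {S : Tournament V} {T : Tournament W} (f : V → W)
    (h : ∀ x y, S.rel x y ↔ T.rel (f x) (f y)) (hT : T.IsAcyclic) : S.IsAcyclic :=
  fun x y z h1 h2 => (h x z).mpr (hT _ _ _ ((h x y).mp h1) ((h y z).mp h2))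

theorem restrict_pair_isAcyclic (T : Tournament V) (a b : V) :
    (T.restrict {a, b}).IsAcyclic := by
  rintro ⟨x, hx⟩ ⟨y, hy⟩ ⟨z, hz⟩ h1 h2
  simp only [Set.mem_insert_iff, Set.mem_singleton_iff] at hx hy hz
  have hxy : x ≠ y := fun h => T.irrefl x (h ▸ h1)
  have hyz : y ≠ z := fun h => T.irrefl y (h ▸ h2)
  have hxz : x = z := by
    rcases hx with rfl | rfl <;> rcases hy with rfl | rfl <;> rcases hz with rfl | rfl <;>
      first | rfl | (exact absurd rfl hxy) | (exact absurd rfl hyz)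
  exact absurd h2 (hxz ▸ T.asymm x y h1)

theorem not_AI_of_acyclic {T : Tournament V} (hac : T.IsAcyclic) (h2 : ∃ x y : V, x ≠ y) :
    ¬ T.AcyclicallyIndecomposable := by
  intro hAI
  obtain ⟨x, y, hxy⟩ := h2
  have hres : (T.restrict Set.univ).IsAcyclic := fun a b c h1 h2 => hac _ _ _ h1 h2
  have hint : T.IsInterval Set.univ := fun y hy => absurd (Set.mem_univ y) hy
  exact hxy (hAI Set.univ hint hres (Set.mem_univ x) (Set.mem_univ y))

theorem Iso.acycInd {S : Tournament V} {T : Tournament W} (h : S.Iso T)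
    (hT : T.AcyclicallyIndecomposable) : S.AcyclicallyIndecomposable := by
  obtain ⟨e, he⟩ := h
  intro X hX hXac
  have hint : T.IsInterval (e '' X) := by
    intro y hy
    rcases hX (e.symm y) (fun hc => hy ⟨_, hc, by simp⟩) with h1 | h1
    · left
      rintro w ⟨x, hx, rfl⟩
      have := (he x (e.symm y)).mp (h1 x hx)
      simpa using this
    · right
      rintro w ⟨x, hx, rfl⟩
      have := (he (e.symm y) x).mp (h1 x hx)
      simpa using this
  have hacy : (T.restrict (e '' X)).IsAcyclic := by
    rintro ⟨x, hx⟩ ⟨y, hy⟩ ⟨z, hz⟩ h1 h2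
    obtain ⟨x', hx', rfl⟩ := hx
    obtain ⟨y', hy', rfl⟩ := hy
    obtain ⟨z', hz', rfl⟩ := hz
    exact (he x' z').mp (hXac ⟨x', hx'⟩ ⟨y', hy'⟩ ⟨z', hz'⟩
      ((he x' y').mpr h1) ((he y' z').mpr h2))
  have hsub := hT (e '' X) hint hacy
  intro x hx y hy
  exact e.injective (hsub ⟨x, hx, rfl⟩ ⟨y, hy, rfl⟩)

theorem index_le_one {T : Tournament V} (X : Set V) (h : (T.inv X).IsAcyclic) :
    T.index ≤ 1 :=
  Nat.sInf_le ⟨[X], rfl, h⟩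

theorem exists_invSeq_isAcyclic [Fintype V] (T : Tournament V) :
    ∃ Xs : List (Set V), (T.invSeq Xs).IsAcyclic := by
  classical
  obtain ⟨e⟩ : Nonempty (V ≃ Fin (Fintype.card V)) := ⟨Fintype.equivFin V⟩
  suffices H : ∀ (k : ℕ) (T : Tournament V),
      {p : V × V | T.rel p.1 p.2 ∧ (e p.2 : ℕ) < (e p.1 : ℕ)}.ncard = k →
        ∃ Xs : List (Set V), (T.invSeq Xs).IsAcyclic from H _ T rfl
  intro k
  induction k using Nat.strong_induction_on with
  | _ k IH =>
    intro T hk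
    rcases Nat.eq_zero_or_pos k with rfl | hkpos
    · refine ⟨[], ?_⟩
      have hempty : {p : V × V | T.rel p.1 p.2 ∧ (e p.2 : ℕ) < (e p.1 : ℕ)} = ∅ :=
        (Set.ncard_eq_zero (Set.toFinite _)).mp hk
      have hord : ∀ x y, T.rel x y → (e x : ℕ) < (e y : ℕ) := by
        intro x y h
        have hxy : x ≠ y := fun hc => T.irrefl x (hc ▸ h)
        have h1 : ¬ ((e y : ℕ) < (e x : ℕ)) := fun hc =>
          Set.notMem_empty (x, y) (hempty ▸ (⟨h, hc⟩ : _ ∈ {p : V × V | T.rel p.1 p.2 ∧ _}))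
        have h2 : (e x : ℕ) ≠ (e y : ℕ) := fun hc => hxy (e.injective (Fin.ext hc))
        omega
      intro x y z h1 h2
      have hxz : (e x : ℕ) < (e z : ℕ) := lt_trans (hord _ _ h1) (hord _ _ h2)
      have hne : x ≠ z := fun hc => by rw [hc] at hxz; omega
      rcases T.total x z hne with h | h
      · exact h
      · exact absurd (hord _ _ h) (by omega)
    · have hne : {p : V × V | T.rel p.1 p.2 ∧ (e p.2 : ℕ) < (e p.1 : ℕ)}.Nonempty := by
        rw [Set.nonempty_iff_ne_empty]
        intro hc
        rw [hc, Set.ncard_empty] at hk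
        omega
      obtain ⟨⟨a, b⟩, hab, hba⟩ := hne
      dsimp only at hab hba
      have hss : {p : V × V | (T.inv {a, b}).rel p.1 p.2 ∧ (e p.2 : ℕ) < (e p.1 : ℕ)} ⊂
          {p : V × V | T.rel p.1 p.2 ∧ (e p.2 : ℕ) < (e p.1 : ℕ)} := by
        constructor
        · rintro ⟨x, y⟩ ⟨hxy, hyx⟩
          dsimp only at hxy hyx
          rw [inv_rel] at hxy
          rcases hxy with ⟨hx, hy, hr⟩ | ⟨_, hr⟩
          · exfalso
            simp only [Set.mem_insert_iff, Set.mem_singleton_iff] at hx hy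
            rcases hx with rfl | rfl <;> rcases hy with rfl | rfl
            · exact T.irrefl _ hr
            · exact T.asymm _ _ hab hr
            · exact absurd hba (by omega)
            · exact T.irrefl _ hr
          · exact ⟨hr, hyx⟩
        · intro hsub
          have hmem := hsub (⟨hab, hba⟩ : (a, b) ∈ {p : V × V | T.rel p.1 p.2 ∧ _})
          obtain ⟨hr, -⟩ := hmem
          rw [inv_rel] at hr
          rcases hr with ⟨-, -, hr⟩ | ⟨hr, -⟩
          · exact T.asymm _ _ hab hr
          · simp at hr
      have hlt : {p : V × V | (T.inv {a, b}).rel p.1 p.2 ∧ (e p.2 : ℕ) < (e p.1 : ℕ)}.ncard < k :=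
        hk ▸ Set.ncard_lt_ncard hss (Set.toFinite _)
      obtain ⟨Xs, hXs⟩ := IH _ hlt (T.inv {a, b}) rfl
      exact ⟨{a, b} :: Xs, hXs⟩

theorem exists_inv_isAcyclic [Fintype V] {T : Tournament V} (hT : ¬ T.IsAcyclic)
    (hidx : T.index ≤ 1) : ∃ X : Set V, (T.inv X).IsAcyclic := by
  obtain ⟨Xs, hXs⟩ := exists_invSeq_isAcyclic T
  have hne : Set.Nonempty {m | ∃ Ys : List (Set V), Ys.length = m ∧ (T.invSeq Ys).IsAcyclic} :=
    ⟨Xs.length, Xs, rfl, hXs⟩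
  obtain ⟨Ys, hlen, hY⟩ := Nat.sInf_mem hne
  have hle : Ys.length ≤ 1 := by rw [hlen]; exact hidx
  match Ys, hle, hY with
  | [], _, hY => exact absurd hY hT
  | [X], _, hY => exact ⟨X, hY⟩

theorem order_equiv_of_acyclic [Fintype V] {L : Tournament V} (h : L.IsAcyclic) :
    ∃ e : V ≃ Fin (Fintype.card V), ∀ x y, L.rel x y ↔ (e x : ℕ) < (e y : ℕ) := by
  haveI : IsTrans V L.rel := ⟨h⟩
  haveI : IsIrrefl V L.rel := ⟨L.irrefl⟩
  haveI : IsTrichotomous V L.rel := ⟨fun x y h1 h2 => by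
    by_contra hne
    rcases L.total x y hne with h' | h'
    · exact h1 h'
    · exact h2 h'⟩
  haveI : IsStrictTotalOrder V L.rel := {}
  haveI : DecidableRel L.rel := fun _ _ => Classical.dec _
  letI lo : LinearOrder V := linearOrderOfSTO L.rel
  let oi : Fin (Fintype.card V) ≃o V := Fintype.orderIsoFinOfCardEq V rfl
  refine ⟨oi.symm.toEquiv, fun x y => ?_⟩
  have h1 : L.rel x y ↔ x < y := Iff.rfl
  have h2 : x < y ↔ oi.symm x < oi.symm y := (OrderIso.lt_iff_lt oi.symm).symm
  rw [h1, h2]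
  exact Iff.rfl

theorem linear_rel {N : ℕ} (i j : Fin N) : (linear N).rel i j ↔ (i : ℕ) < (j : ℕ) := Iff.rfl

theorem mem_evensLT {N k : ℕ} {i : Fin N} :
    i ∈ evensLT k ↔ (i : ℕ) % 2 = 0 ∧ (i : ℕ) < 2 * k := Iff.rfl

theorem mem_oddsLT {N k : ℕ} {i : Fin N} :
    i ∈ oddsLT k ↔ (i : ℕ) % 2 = 1 ∧ (i : ℕ) < 2 * k := Iff.rfl

theorem key1 {N : ℕ} (A : Set (Fin N))
    (halt : ∀ i j : Fin N, (i : ℕ) + 1 = (j : ℕ) → (i ∈ A ↔ j ∉ A))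
    (htwo : ∃ i j : Fin N, i ∈ A ∧ j ∈ A ∧ i ≠ j) :
    ((linear N).inv A).AcyclicallyIndecomposable := by
  intro X hint hac
  rw [← Set.not_nontrivial_iff]
  intro hnt
  obtain ⟨u0, hu0, v0, hv0, huv0⟩ := hnt
  obtain ⟨a, haX, hamin⟩ := Set.exists_min_image X (fun x => (x : ℕ)) (Set.toFinite X) ⟨u0, hu0⟩
  obtain ⟨b, hbX, hbmax⟩ := Set.exists_max_image X (fun x => (x : ℕ)) (Set.toFinite X) ⟨u0, hu0⟩
  have hab : (a : ℕ) < (b : ℕ) := by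
    have h1 := hamin u0 hu0
    have h2 := hbmax u0 hu0
    have h3 := hamin v0 hv0
    have h4 := hbmax v0 hv0
    have h5 : (u0 : ℕ) ≠ (v0 : ℕ) := fun h => huv0 (Fin.ext h)
    omega
  have hrel : ∀ x y : Fin N, ((linear N).inv A).rel x y ↔
      ((x ∈ A ∧ y ∈ A ∧ (y : ℕ) < (x : ℕ)) ∨ ((x ∉ A ∨ y ∉ A) ∧ (x : ℕ) < (y : ℕ))) :=
    fun x y => Iff.rfl
  have zlem : ∀ u v z : Fin N, u ∈ X → v ∈ X → u ∈ A → v ∉ A → z ∈ A → z ∉ X →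
      (((z : ℕ) < (u : ℕ) ∧ (z : ℕ) < (v : ℕ)) ∨ ((u : ℕ) < (z : ℕ) ∧ (v : ℕ) < (z : ℕ))) →
      False := by
    intro u v z huX hvX huA hvA hzA hzX hside
    rcases hint z hzX with hopt | hopt
    · have h1 := (hrel u z).mp (hopt u huX)
      have h2 := (hrel v z).mp (hopt v hvX)
      rcases h1 with ⟨-, -, h1⟩ | ⟨h1, -⟩
      · rcases h2 with ⟨h2, -, -⟩ | ⟨-, h2⟩
        · exact hvA h2
        · omega
      · tauto
    · have h1 := (hrel z u).mp (hopt u huX)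
      have h2 := (hrel z v).mp (hopt v hvX)
      rcases h1 with ⟨-, -, h1⟩ | ⟨h1, -⟩
      · rcases h2 with ⟨-, h2, -⟩ | ⟨-, h2⟩
        · exact hvA h2
        · omega
      · tauto
  have hbet : ∀ y : Fin N, y ∉ X → (a : ℕ) < (y : ℕ) → (y : ℕ) < (b : ℕ) → y ∈ A := by
    intro y hyX hay hyb
    by_contra hyA
    rcases hint y hyX with hopt | hopt
    · have := (hrel b y).mp (hopt b hbX)
      rcases this with ⟨-, h, -⟩ | ⟨-, h⟩
      · exact hyA h
      · omega
    · have := (hrel y a).mp (hopt a haX)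
      rcases this with ⟨h, -, -⟩ | ⟨-, h⟩
      · exact hyA h
      · omega
  by_cases hseg : ∀ (k : ℕ) (hk : k < N), (a : ℕ) < k → k < (b : ℕ) → (⟨k, hk⟩ : Fin N) ∈ X
  · have hmemX : ∀ (k : ℕ) (hk : k < N), (a : ℕ) ≤ k → k ≤ (b : ℕ) → (⟨k, hk⟩ : Fin N) ∈ X := by
      intro k hk h1 h2
      rcases eq_or_lt_of_le h1 with h | h
      · have he : (⟨k, hk⟩ : Fin N) = a := Fin.ext h.symm
        rw [he]; exact haX
      · rcases eq_or_lt_of_le h2 with h' | h'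
        · have he : (⟨k, hk⟩ : Fin N) = b := Fin.ext h'
          rw [he]; exact hbX
        · exact hseg k hk h h'
    by_cases hcyc : ∃ c : Fin N, c ∈ A ∧ (a : ℕ) ≤ (c : ℕ) ∧ (c : ℕ) + 2 ≤ (b : ℕ)
    · obtain ⟨c, hcA, hac', hcb⟩ := hcyc
      have hbN : (b : ℕ) < N := b.isLt
      have h1 : (c : ℕ) + 1 < N := by omega
      have h2 : (c : ℕ) + 2 < N := by omega
      have hv1 : ((⟨(c : ℕ) + 1, h1⟩ : Fin N) : ℕ) = (c : ℕ) + 1 := rfl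
      have hv2 : ((⟨(c : ℕ) + 2, h2⟩ : Fin N) : ℕ) = (c : ℕ) + 2 := rfl
      have hc1A : (⟨(c : ℕ) + 1, h1⟩ : Fin N) ∉ A := (halt c ⟨(c : ℕ) + 1, h1⟩ rfl).mp hcA
      have hc2A : (⟨(c : ℕ) + 2, h2⟩ : Fin N) ∈ A := by
        have := halt ⟨(c : ℕ) + 1, h1⟩ ⟨(c : ℕ) + 2, h2⟩ (by omega)
        tauto
      have hcX : c ∈ X := by
        have := hmemX (c : ℕ) c.isLt hac' (by omega)
        simpa using this
      have hc1X : (⟨(c : ℕ) + 1, h1⟩ : Fin N) ∈ X := hmemX _ h1 (by omega) (by omega)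
      have hc2X : (⟨(c : ℕ) + 2, h2⟩ : Fin N) ∈ X := hmemX _ h2 (by omega) (by omega)
      have r1 : ((linear N).inv A).rel c ⟨(c : ℕ) + 1, h1⟩ := by
        rw [hrel]; right; exact ⟨Or.inr hc1A, by omega⟩
      have r2 : ((linear N).inv A).rel ⟨(c : ℕ) + 1, h1⟩ ⟨(c : ℕ) + 2, h2⟩ := by
        rw [hrel]; right; exact ⟨Or.inl hc1A, by omega⟩
      have r3 : ((linear N).inv A).rel ⟨(c : ℕ) + 2, h2⟩ c := by
        rw [hrel]; left; exact ⟨hc2A, hcA, by omega⟩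
      have := hac ⟨c, hcX⟩ ⟨_, hc1X⟩ ⟨_, hc2X⟩ r1 r2
      exact ((linear N).inv A).asymm _ _ this r3
    · push_neg at hcyc
      obtain ⟨i, j, hiA, hjA, hij⟩ := htwo
      by_cases haA : a ∈ A
      · have hb1 : (b : ℕ) = (a : ℕ) + 1 := by
          have := hcyc a haA (le_refl _)
          omega
        have hbA : b ∉ A := (halt a b (by omega)).mp haA
        obtain ⟨z, hzA, hza⟩ : ∃ z : Fin N, z ∈ A ∧ z ≠ a := by
          by_cases h : i = a
          · exact ⟨j, hjA, fun hc => hij (by rw [h, hc])⟩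
          · exact ⟨i, hiA, h⟩
        have hza' : (z : ℕ) ≠ (a : ℕ) := fun h => hza (Fin.ext h)
        have hzb' : (z : ℕ) ≠ (b : ℕ) := fun h => hbA ((show z = b from Fin.ext h) ▸ hzA)
        have hzX : z ∉ X := by
          intro h
          have := hamin z h
          have := hbmax z h
          omega
        exact zlem a b z haX hbX haA hbA hzA hzX (by omega)
      · have haN : (a : ℕ) + 1 < N := by have := b.isLt; omega
        have huval : ((⟨(a : ℕ) + 1, haN⟩ : Fin N) : ℕ) = (a : ℕ) + 1 := rfl
        have huA : (⟨(a : ℕ) + 1, haN⟩ : Fin N) ∈ A := by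
          have := halt a ⟨(a : ℕ) + 1, haN⟩ rfl
          tauto
        have hb2 : (b : ℕ) ≤ (a : ℕ) + 2 := by
          have := hcyc ⟨(a : ℕ) + 1, haN⟩ huA (by omega)
          omega
        have huX : (⟨(a : ℕ) + 1, haN⟩ : Fin N) ∈ X := hmemX _ haN (by omega) (by omega)
        obtain ⟨z, hzA, hzu⟩ : ∃ z : Fin N, z ∈ A ∧ z ≠ ⟨(a : ℕ) + 1, haN⟩ := by
          by_cases h : i = (⟨(a : ℕ) + 1, haN⟩ : Fin N)
          · exact ⟨j, hjA, fun hc => hij (by rw [h, hc])⟩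
          · exact ⟨i, hiA, h⟩
        have hzu' : (z : ℕ) ≠ (a : ℕ) + 1 := fun h => hzu (Fin.ext h)
        have hza' : (z : ℕ) ≠ (a : ℕ) := fun h => haA ((show z = a from Fin.ext h) ▸ hzA)
        have hzb' : (z : ℕ) < (a : ℕ) ∨ (b : ℕ) < (z : ℕ) := by
          by_cases hbb : (b : ℕ) = (a : ℕ) + 2
          · have hbA : b ∉ A := by
              have := halt ⟨(a : ℕ) + 1, haN⟩ b (by omega)
              tauto
            have : (z : ℕ) ≠ (b : ℕ) := fun h => hbA ((show z = b from Fin.ext h) ▸ hzA)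
            omega
          · omega
        have hzX : z ∉ X := by
          intro h
          have := hamin z h
          have := hbmax z h
          omega
        exact zlem ⟨(a : ℕ) + 1, haN⟩ a z huX haX huA haA hzA hzX (by omega)
  · push_neg at hseg
    obtain ⟨k, hk, hak, hkb, hkX⟩ := hseg
    have hkval : ((⟨k, hk⟩ : Fin N) : ℕ) = k := rfl
    have hyA : (⟨k, hk⟩ : Fin N) ∈ A := hbet _ hkX hak hkb
    rcases hint _ hkX with hopt | hopt
    · have hby := (hrel b ⟨k, hk⟩).mp (hopt b hbX)
      have hbA : b ∈ A := by
        rcases hby with ⟨h, -, -⟩ | ⟨-, h⟩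
        · exact h
        · omega
      have hmN : (b : ℕ) - 1 < N := by omega
      have hmval : ((⟨(b : ℕ) - 1, hmN⟩ : Fin N) : ℕ) = (b : ℕ) - 1 := rfl
      have hmA : (⟨(b : ℕ) - 1, hmN⟩ : Fin N) ∉ A := by
        intro h
        exact (halt ⟨(b : ℕ) - 1, hmN⟩ b (by omega)).mp h hbA
      have hkm : k ≠ (b : ℕ) - 1 := by
        intro h
        apply hmA
        rw [show (⟨(b : ℕ) - 1, hmN⟩ : Fin N) = ⟨k, hk⟩ from Fin.ext (by omega)]
        exact hyA
      have hmX : (⟨(b : ℕ) - 1, hmN⟩ : Fin N) ∈ X := by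
        by_contra h
        exact hmA (hbet _ h (by omega) (by omega))
      have := (hrel _ _).mp (hopt _ hmX)
      rcases this with ⟨h, -, -⟩ | ⟨-, h⟩
      · exact hmA h
      · omega
    · have hya := (hrel ⟨k, hk⟩ a).mp (hopt a haX)
      have haA : a ∈ A := by
        rcases hya with ⟨-, h, -⟩ | ⟨-, h⟩
        · exact h
        · omega
      have hmN : (a : ℕ) + 1 < N := by omega
      have hmval : ((⟨(a : ℕ) + 1, hmN⟩ : Fin N) : ℕ) = (a : ℕ) + 1 := rfl
      have hmA : (⟨(a : ℕ) + 1, hmN⟩ : Fin N) ∉ A := (halt a _ rfl).mp haA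
      have hkm : k ≠ (a : ℕ) + 1 := by
        intro h
        apply hmA
        rw [show (⟨(a : ℕ) + 1, hmN⟩ : Fin N) = ⟨k, hk⟩ from Fin.ext (by omega)]
        exact hyA
      have hmX : (⟨(a : ℕ) + 1, hmN⟩ : Fin N) ∈ X := by
        by_contra h
        exact hmA (hbet _ h (by omega) (by omega))
      have := (hrel _ _).mp (hopt _ hmX)
      rcases this with ⟨-, h, -⟩ | ⟨-, h⟩
      · exact hmA h
      · omega

theorem mem_pattern {N : ℕ} {A : Set (Fin N)}
    (halt : ∀ i j : Fin N, (i : ℕ) + 1 = (j : ℕ) → (i ∈ A ↔ j ∉ A)) :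
    ∀ (d : ℕ) (i j : Fin N), (j : ℕ) = (i : ℕ) + d → i ∈ A → (j ∈ A ↔ d % 2 = 0) := by
  intro d
  induction d with
  | zero =>
    intro i j hij hi
    have he : j = i := Fin.ext (by omega)
    rw [he]
    simp [hi]
  | succ d IH =>
    intro i j hij hi
    have hmN : (i : ℕ) + d < N := by have := j.isLt; omega
    have hmval : ((⟨(i : ℕ) + d, hmN⟩ : Fin N) : ℕ) = (i : ℕ) + d := rfl
    have hIH := IH i ⟨(i : ℕ) + d, hmN⟩ rfl hi
    have hstep := halt ⟨(i : ℕ) + d, hmN⟩ j (by omega)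
    have hd : (¬ d % 2 = 0) ↔ (d + 1) % 2 = 0 := by omega
    tauto

theorem alt_of_AI {N : ℕ} {A : Set (Fin N)}
    (hAI : ((linear N).inv A).AcyclicallyIndecomposable)
    (i j : Fin N) (hij : (i : ℕ) + 1 = (j : ℕ)) : i ∈ A ↔ j ∉ A := by
  by_contra hcon
  have hsame : (i ∈ A ∧ j ∈ A) ∨ (i ∉ A ∧ j ∉ A) := by tauto
  have hne : i ≠ j := fun h => by rw [h] at hij; omega
  have hrel : ∀ x y : Fin N, ((linear N).inv A).rel x y ↔
      ((x ∈ A ∧ y ∈ A ∧ (y : ℕ) < (x : ℕ)) ∨ ((x ∉ A ∨ y ∉ A) ∧ (x : ℕ) < (y : ℕ))) :=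
    fun x y => Iff.rfl
  have hint : ((linear N).inv A).IsInterval {i, j} := by
    intro y hy
    simp only [Set.mem_insert_iff, Set.mem_singleton_iff, not_or] at hy
    obtain ⟨hyi, hyj⟩ := hy
    have hyi' : (y : ℕ) ≠ (i : ℕ) := fun h => hyi (Fin.ext h)
    have hyj' : (y : ℕ) ≠ (j : ℕ) := fun h => hyj (Fin.ext h)
    have hmem : ∀ x : Fin N, x ∈ ({i, j} : Set (Fin N)) → x = i ∨ x = j := by
      intro x hx; simpa using hx
    have hside : (y : ℕ) < (i : ℕ) ∨ (j : ℕ) < (y : ℕ) := by omega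
    rcases hsame with ⟨hiA, hjA⟩ | ⟨hiA, hjA⟩
    · by_cases hyA : y ∈ A
      · rcases hside with h | h
        · left
          intro x hx
          rcases hmem x hx with rfl | rfl <;> rw [hrel]
          · exact Or.inl ⟨hiA, hyA, h⟩
          · exact Or.inl ⟨hjA, hyA, by omega⟩
        · right
          intro x hx
          rcases hmem x hx with rfl | rfl <;> rw [hrel]
          · exact Or.inl ⟨hyA, hiA, by omega⟩
          · exact Or.inl ⟨hyA, hjA, by omega⟩
      · rcases hside with h | h
        · right
          intro x hx
          rcases hmem x hx with rfl | rfl <;> rw [hrel]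
          · exact Or.inr ⟨Or.inl hyA, by omega⟩
          · exact Or.inr ⟨Or.inl hyA, by omega⟩
        · left
          intro x hx
          rcases hmem x hx with rfl | rfl <;> rw [hrel]
          · exact Or.inr ⟨Or.inr hyA, by omega⟩
          · exact Or.inr ⟨Or.inr hyA, by omega⟩
    · rcases hside with h | h
      · right
        intro x hx
        rcases hmem x hx with rfl | rfl <;> rw [hrel]
        · exact Or.inr ⟨Or.inr hiA, by omega⟩
        · exact Or.inr ⟨Or.inr hjA, by omega⟩
      · left
        intro x hx
        rcases hmem x hx with rfl | rfl <;> rw [hrel]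
        · exact Or.inr ⟨Or.inl hiA, by omega⟩
        · exact Or.inr ⟨Or.inl hjA, by omega⟩
  have hsub := hAI {i, j} hint (restrict_pair_isAcyclic _ i j)
  exact hne (hsub (by simp) (by simp))

@[simp] theorem cone_rel_none_none {T : Tournament V} : (T.cone).rel none none ↔ False :=
  Iff.rfl

@[simp] theorem cone_rel_none_some {T : Tournament V} (b : V) :
    (T.cone).rel none (some b) ↔ True := Iff.rfl

@[simp] theorem cone_rel_some_none {T : Tournament V} (a : V) :
    (T.cone).rel (some a) none ↔ False := Iff.rfl

@[simp] theorem cone_rel_some_some {T : Tournament V} (a b : V) :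
    (T.cone).rel (some a) (some b) ↔ T.rel a b := Iff.rfl

@[simp] theorem cocone_rel_none_none {T : Tournament V} : (T.cocone).rel none none ↔ False :=
  Iff.rfl

@[simp] theorem cocone_rel_none_some {T : Tournament V} (b : V) :
    (T.cocone).rel none (some b) ↔ False := Iff.rfl

@[simp] theorem cocone_rel_some_none {T : Tournament V} (a : V) :
    (T.cocone).rel (some a) none ↔ True := Iff.rfl

@[simp] theorem cocone_rel_some_some {T : Tournament V} (a b : V) :
    (T.cocone).rel (some a) (some b) ↔ T.rel a b := Iff.rfl

theorem relU (n : ℕ) (a b : Fin (2 * n + 1)) : (U n).rel a b ↔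
    ((a ∈ evensLT (n + 1) ∧ b ∈ evensLT (n + 1) ∧ (b : ℕ) < (a : ℕ)) ∨
      ((a ∉ evensLT (n + 1) ∨ b ∉ evensLT (n + 1)) ∧ (a : ℕ) < (b : ℕ))) := Iff.rfl

theorem isoE2 (n : ℕ) : (U n).cone.Iso ((linear (2 * n + 2)).inv (oddsLT (n + 1))) := by
  refine ⟨(finSuccEquiv (2 * n + 1)).symm, ?_⟩
  have hrelS : ∀ x y : Fin (2 * n + 2), ((linear (2 * n + 2)).inv (oddsLT (n + 1))).rel x y ↔
      ((x ∈ oddsLT (n + 1) ∧ y ∈ oddsLT (n + 1) ∧ (y : ℕ) < (x : ℕ)) ∨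
        ((x ∉ oddsLT (n + 1) ∨ y ∉ oddsLT (n + 1)) ∧ (x : ℕ) < (y : ℕ))) := fun x y => Iff.rfl
  rintro (_ | a) (_ | b)
  · rw [finSuccEquiv_symm_none]
    simp only [false_iff, true_iff, cone_rel_none_none, hrelS, mem_oddsLT, Fin.val_zero]
    omega
  · rw [finSuccEquiv_symm_none, finSuccEquiv_symm_some]
    simp only [false_iff, true_iff, cone_rel_none_some, hrelS, mem_oddsLT, Fin.val_zero, Fin.val_succ]
    omega
  · rw [finSuccEquiv_symm_none, finSuccEquiv_symm_some]
    simp only [false_iff, true_iff, cone_rel_some_none, hrelS, mem_oddsLT, Fin.val_zero, Fin.val_succ]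
    omega
  · rw [finSuccEquiv_symm_some, finSuccEquiv_symm_some]
    simp only [cone_rel_some_some, relU, hrelS, mem_oddsLT, mem_evensLT, Fin.val_succ]
    omega

theorem isoE3 (n : ℕ) : (U n).cocone.Iso ((linear (2 * n + 2)).inv (evensLT (n + 1))) := by
  refine ⟨(finSuccEquivLast (n := 2 * n + 1)).symm, ?_⟩
  have hrelS : ∀ x y : Fin (2 * n + 2), ((linear (2 * n + 2)).inv (evensLT (n + 1))).rel x y ↔
      ((x ∈ evensLT (n + 1) ∧ y ∈ evensLT (n + 1) ∧ (y : ℕ) < (x : ℕ)) ∨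
        ((x ∉ evensLT (n + 1) ∨ y ∉ evensLT (n + 1)) ∧ (x : ℕ) < (y : ℕ))) := fun x y => Iff.rfl
  rintro (_ | a) (_ | b)
  · rw [finSuccEquivLast_symm_none]
    simp only [false_iff, true_iff, cocone_rel_none_none, hrelS, mem_evensLT, Fin.val_last]
    omega
  · rw [finSuccEquivLast_symm_none, finSuccEquivLast_symm_some]
    simp only [false_iff, true_iff, cocone_rel_none_some, hrelS, mem_evensLT, Fin.val_last, Fin.coe_castSucc]
    omega
  · rw [finSuccEquivLast_symm_none, finSuccEquivLast_symm_some]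
    simp only [false_iff, true_iff, cocone_rel_some_none, hrelS, mem_evensLT, Fin.val_last, Fin.coe_castSucc]
    omega
  · rw [finSuccEquivLast_symm_some, finSuccEquivLast_symm_some]
    simp only [cocone_rel_some_some, relU, hrelS, mem_evensLT, Fin.coe_castSucc]

theorem isoE4 (n : ℕ) :
    (U n).cone.cocone.Iso ((linear (2 * n + 3)).inv (oddsLT (n + 1))) := by
  refine ⟨(Equiv.optionCongr (finSuccEquiv (2 * n + 1)).symm).trans
    (finSuccEquivLast (n := 2 * n + 2)).symm, ?_⟩
  have hrelS : ∀ x y : Fin (2 * n + 3), ((linear (2 * n + 3)).inv (oddsLT (n + 1))).rel x y ↔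
      ((x ∈ oddsLT (n + 1) ∧ y ∈ oddsLT (n + 1) ∧ (y : ℕ) < (x : ℕ)) ∨
        ((x ∉ oddsLT (n + 1) ∨ y ∉ oddsLT (n + 1)) ∧ (x : ℕ) < (y : ℕ))) := fun x y => Iff.rfl
  rintro (_ | (_ | a)) (_ | (_ | b)) <;>
    simp only [Equiv.trans_apply, Equiv.optionCongr, Equiv.coe_fn_mk, Option.map_none,
      Option.map_some, false_iff, true_iff, finSuccEquiv_symm_none, finSuccEquiv_symm_some,
      finSuccEquivLast_symm_none, finSuccEquivLast_symm_some, cocone_rel_none_none,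
      cocone_rel_none_some, cocone_rel_some_none, cocone_rel_some_some, cone_rel_none_none,
      cone_rel_none_some, cone_rel_some_none, cone_rel_some_some, relU, hrelS, mem_oddsLT,
      mem_evensLT, Fin.val_succ, Fin.coe_castSucc, Fin.val_last, Fin.val_zero] <;>
    omega

theorem forward_a (N n : ℕ) (hn : N = 2 * n + 1) (A : Set (Fin N))
    (hA : ∀ i : Fin N, i ∈ A ↔ (i : ℕ) % 2 = 0) : ((linear N).inv A).Iso (U n) := by
  subst hn
  have hAe : A = evensLT (n + 1) := Set.ext fun i => by rw [hA i, mem_evensLT]; omega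
  rw [hAe]
  exact Iso.refl _

theorem forward_b (N n : ℕ) (hn : N = 2 * n + 2) (A : Set (Fin N))
    (hA : ∀ i : Fin N, i ∈ A ↔ (i : ℕ) % 2 = 0) :
    ((linear N).inv A).Iso (U n).cocone := by
  subst hn
  have hAe : A = evensLT (n + 1) := Set.ext fun i => by rw [hA i, mem_evensLT]; omega
  rw [hAe]
  exact (isoE3 n).symm

theorem forward_c (N n : ℕ) (hn : N = 2 * n + 2) (A : Set (Fin N))
    (hA : ∀ i : Fin N, i ∈ A ↔ (i : ℕ) % 2 = 1) :
    ((linear N).inv A).Iso (U n).cone := by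
  subst hn
  have hAe : A = oddsLT (n + 1) := Set.ext fun i => by rw [hA i, mem_oddsLT]; omega
  rw [hAe]
  exact (isoE2 n).symm

theorem forward_d (N n : ℕ) (hn : N = 2 * n + 3) (A : Set (Fin N))
    (hA : ∀ i : Fin N, i ∈ A ↔ (i : ℕ) % 2 = 1) :
    ((linear N).inv A).Iso (U n).cone.cocone := by
  subst hn
  have hAe : A = oddsLT (n + 1) := Set.ext fun i => by rw [hA i, mem_oddsLT]; omega
  rw [hAe]
  exact (isoE4 n).symm

theorem classify {N : ℕ} (hN2 : 2 ≤ N) (A : Set (Fin N))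
    (hAI : ((linear N).inv A).AcyclicallyIndecomposable) :
    ∃ n : ℕ, 1 ≤ n ∧
      (((linear N).inv A).Iso (U n) ∨ ((linear N).inv A).Iso (U n).cone ∨
        ((linear N).inv A).Iso (U n).cocone ∨ ((linear N).inv A).Iso (U n).cone.cocone) := by
  have halt : ∀ i j : Fin N, (i : ℕ) + 1 = (j : ℕ) → (i ∈ A ↔ j ∉ A) := alt_of_AI hAI
  have h0N : 0 < N := by omega
  have h1N : 1 < N := by omega
  have hpair : ∃ x y : Fin N, x ≠ y := ⟨⟨0, h0N⟩, ⟨1, h1N⟩, by simp [Fin.ext_iff]⟩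
  have hlinac : (linear N).IsAcyclic := fun x y z h1 h2 => lt_trans h1 h2
  have hsub : ¬ A.Subsingleton := by
    intro hs
    exact not_AI_of_acyclic (fun x y z h1 h2 => by
      rw [inv_subsingleton_rel hs] at h1 h2 ⊢
      exact hlinac _ _ _ h1 h2) hpair hAI
  by_cases hp : (⟨0, h0N⟩ : Fin N) ∈ A
  · have hA : ∀ i : Fin N, i ∈ A ↔ (i : ℕ) % 2 = 0 := by
      intro i
      have := mem_pattern halt (i : ℕ) ⟨0, h0N⟩ i (by simp) hp
      simpa using this
    have hN3 : 3 ≤ N := by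
      by_contra h
      apply hsub
      intro x hx y hy
      have hx' := (hA x).mp hx
      have hy' := (hA y).mp hy
      have := x.isLt
      have := y.isLt
      exact Fin.ext (by omega)
    rcases Nat.even_or_odd N with hNe | hNo
    · obtain ⟨m, hm⟩ := hNe
      have hn : N = 2 * (m - 1) + 2 := by omega
      exact ⟨m - 1, by omega, Or.inr (Or.inr (Or.inl (forward_b N (m - 1) hn A hA)))⟩
    · obtain ⟨m, hm⟩ := hNo
      exact ⟨m, by omega, Or.inl (forward_a N m hm A hA)⟩
  · have hp1 : (⟨1, h1N⟩ : Fin N) ∈ A := by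
      have := halt ⟨0, h0N⟩ ⟨1, h1N⟩ (by simp)
      tauto
    have hA : ∀ i : Fin N, i ∈ A ↔ (i : ℕ) % 2 = 1 := by
      intro i
      rcases Nat.eq_zero_or_pos (i : ℕ) with h | h
      · have he : i = ⟨0, h0N⟩ := Fin.ext (by simpa using h)
        rw [he]
        exact iff_of_false hp (by omega)
      · have hv1 : ((⟨1, h1N⟩ : Fin N) : ℕ) = 1 := rfl
        have := mem_pattern halt ((i : ℕ) - 1) ⟨1, h1N⟩ i (by omega) hp1
        rw [this]
        omega
    have hN4 : 4 ≤ N := by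
      by_contra h
      apply hsub
      intro x hx y hy
      have hx' := (hA x).mp hx
      have hy' := (hA y).mp hy
      have := x.isLt
      have := y.isLt
      exact Fin.ext (by omega)
    rcases Nat.even_or_odd N with hNe | hNo
    · obtain ⟨m, hm⟩ := hNe
      have hn : N = 2 * (m - 1) + 2 := by omega
      exact ⟨m - 1, by omega, Or.inr (Or.inl (forward_c N (m - 1) hn A hA))⟩
    · obtain ⟨m, hm⟩ := hNo
      have hn : N = 2 * (m - 1) + 3 := by omega
      exact ⟨m - 1, by omega, Or.inr (Or.inr (Or.inr (forward_d N (m - 1) hn A hA)))⟩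

theorem halt_evensLT {N k : ℕ} (h : N ≤ 2 * k) :
    ∀ i j : Fin N, (i : ℕ) + 1 = (j : ℕ) → (i ∈ evensLT k ↔ j ∉ evensLT k) := by
  intro i j hij
  rw [mem_evensLT, mem_evensLT]
  omega

theorem halt_oddsLT {N k : ℕ} (h : N ≤ 2 * k + 1) :
    ∀ i j : Fin N, (i : ℕ) + 1 = (j : ℕ) → (i ∈ oddsLT k ↔ j ∉ oddsLT k) := by
  intro i j hij
  rw [mem_oddsLT, mem_oddsLT]
  omega

theorem htwo_evensLT {N k : ℕ} (h3 : 3 ≤ N) (hk : 2 ≤ k) :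
    ∃ i j : Fin N, i ∈ evensLT k ∧ j ∈ evensLT k ∧ i ≠ j := by
  have h0 : 0 < N := by omega
  have h2 : 2 < N := by omega
  have hv0 : ((⟨0, h0⟩ : Fin N) : ℕ) = 0 := rfl
  have hv2 : ((⟨2, h2⟩ : Fin N) : ℕ) = 2 := rfl
  refine ⟨⟨0, h0⟩, ⟨2, h2⟩, ?_, ?_, ?_⟩
  · rw [mem_evensLT]; omega
  · rw [mem_evensLT]; omega
  · intro h
    have := congrArg Fin.val h
    rw [hv0, hv2] at this
    omega

theorem htwo_oddsLT {N k : ℕ} (h4 : 4 ≤ N) (hk : 2 ≤ k) :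
    ∃ i j : Fin N, i ∈ oddsLT k ∧ j ∈ oddsLT k ∧ i ≠ j := by
  have h1 : 1 < N := by omega
  have h3 : 3 < N := by omega
  have hv1 : ((⟨1, h1⟩ : Fin N) : ℕ) = 1 := rfl
  have hv3 : ((⟨3, h3⟩ : Fin N) : ℕ) = 3 := rfl
  refine ⟨⟨1, h1⟩, ⟨3, h3⟩, ?_, ?_, ?_⟩
  · rw [mem_oddsLT]; omega
  · rw [mem_oddsLT]; omega
  · intro h
    have := congrArg Fin.val h
    rw [hv1, hv3] at this
    omega

theorem target_props {V : Type*} [Fintype V] {N : ℕ} {A : Set (Fin N)}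
    (halt : ∀ i j : Fin N, (i : ℕ) + 1 = (j : ℕ) → (i ∈ A ↔ j ∉ A))
    (htwo : ∃ i j : Fin N, i ∈ A ∧ j ∈ A ∧ i ≠ j)
    {T : Tournament V} (h : T.Iso ((linear N).inv A)) :
    T.AcyclicallyIndecomposable ∧ T.index ≤ 1 := by
  constructor
  · exact h.acycInd (key1 A halt htwo)
  · obtain ⟨e, he⟩ := h
    refine index_le_one (e ⁻¹' A) ?_
    have key : ∀ u v, (T.inv (e ⁻¹' A)).rel u v ↔ (e u : ℕ) < (e v : ℕ) := by
      intro u v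
      rw [inv_rel]
      have h1 := he u v
      have h2 := he v u
      rw [inv_rel] at h1 h2
      simp only [linear_rel] at h1 h2
      simp only [Set.mem_preimage]
      rw [h1, h2]
      constructor
      · rintro (⟨hu, hv, (⟨-, -, h⟩ | ⟨hc, -⟩)⟩ | ⟨hc, (⟨hu, hv, -⟩ | ⟨-, h⟩)⟩)
        · exact h
        · rcases hc with hc | hc
          · exact absurd hv hc
          · exact absurd hu hc
        · rcases hc with hc | hc
          · exact absurd hu hc
          · exact absurd hv hc
        · exact h
      · intro h
        by_cases hu : e u ∈ A
        · by_cases hv : e v ∈ A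
          · exact Or.inl ⟨hu, hv, Or.inl ⟨hv, hu, h⟩⟩
          · exact Or.inr ⟨Or.inr hv, Or.inr ⟨Or.inr hv, h⟩⟩
        · exact Or.inr ⟨Or.inl hu, Or.inr ⟨Or.inl hu, h⟩⟩
    exact fun x y z h1 h2 => (key x z).mpr (lt_trans ((key x y).mp h1) ((key y z).mp h2))

end Tournament

/-- a finite tournament with at least two vertices is an acyclically
indecomposable tournament of inversion index at most `1` iff it is isomorphic to
`U_{2n+1}`, `2̲(1̲, U_{2n+1})`, `2̲(U_{2n+1}, 1̲)` or `3̲(1̲, U_{2n+1}, 1̲)` for some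
`n ≥ 1`. -/
theorem acyclically_indecomposable_index_le_one {V : Type*} [Fintype V]
    (T : Tournament V) (hcard : 2 ≤ Fintype.card V) :
    (T.AcyclicallyIndecomposable ∧ T.index ≤ 1) ↔
      ∃ n : ℕ, 1 ≤ n ∧
        (T.Iso (U n) ∨ T.Iso (U n).cone ∨ T.Iso (U n).cocone ∨
          T.Iso (U n).cone.cocone) := by
  constructor
  · rintro ⟨hAI, hidx⟩
    have hpair : ∃ x y : V, x ≠ y := Fintype.exists_pair_of_one_lt_card (by omega)
    have hTac : ¬ T.IsAcyclic := fun h => Tournament.not_AI_of_acyclic h hpair hAI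
    obtain ⟨X, hX⟩ := Tournament.exists_inv_isAcyclic hTac hidx
    obtain ⟨e, he⟩ := Tournament.order_equiv_of_acyclic hX
    have hmem : ∀ x : V, e x ∈ (e.symm ⁻¹' X : Set (Fin (Fintype.card V))) ↔ x ∈ X := by
      intro x; simp
    have hTS : ∀ x y, T.rel x y ↔
        ((linear (Fintype.card V)).inv (e.symm ⁻¹' X)).rel (e x) (e y) := by
      intro x y
      rw [← Tournament.inv_inv_rel T X x y]
      rw [Tournament.inv_rel (T.inv X) X x y]
      rw [Tournament.inv_rel (linear (Fintype.card V)) (e.symm ⁻¹' X) (e x) (e y)]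
      rw [he y x, he x y]
      simp only [Tournament.linear_rel, hmem]
    have hIsoTS : T.Iso ((linear (Fintype.card V)).inv (e.symm ⁻¹' X)) := ⟨e, hTS⟩
    have hSAI := (hIsoTS.symm).acycInd hAI
    obtain ⟨n, hn, hc⟩ := Tournament.classify hcard (e.symm ⁻¹' X) hSAI
    refine ⟨n, hn, ?_⟩
    rcases hc with h | h | h | h
    · exact Or.inl (hIsoTS.trans h)
    · exact Or.inr (Or.inl (hIsoTS.trans h))
    · exact Or.inr (Or.inr (Or.inl (hIsoTS.trans h)))
    · exact Or.inr (Or.inr (Or.inr (hIsoTS.trans h)))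
  · rintro ⟨n, hn, h | h | h | h⟩
    · exact Tournament.target_props (Tournament.halt_evensLT (by omega))
        (Tournament.htwo_evensLT (by omega) (by omega)) h
    · exact Tournament.target_props (Tournament.halt_oddsLT (by omega))
        (Tournament.htwo_oddsLT (by omega) (by omega)) (h.trans (Tournament.isoE2 n))
    · exact Tournament.target_props (Tournament.halt_evensLT (by omega))
        (Tournament.htwo_evensLT (by omega) (by omega)) (h.trans (Tournament.isoE3 n))
    · exact Tournament.target_props (Tournament.halt_oddsLT (by omega))
        (Tournament.htwo_oddsLT (by omega) (by omega)) (h.trans (Tournament.isoE4 n))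
end
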